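/- arXiv:1307.5090 — 4 statements merged into one kernel-verified Lean document; each statement's English description precedes it below -/
import Mathlib

section
/- Let (Ω,μ) be a finite probability space in which every atom has positive probability and the minimum atom probability is α ≤ 1/2. Then for every γ ∈ (0,1) there exists δ > 0, depending only on γ and α, such that for every n ≥ 1 and every f : Ω^n → ℝ, ‖T_{1−γ} f‖_{2+δ} ≤ ‖f‖_2. -/
open Finset

noncomputable section
namespace OCSPPaper

/-- Weight of a point of the product space `Ω^n` under `μ^{⊗n}`. -/
noncomputable def prodW {Ω : Type} [Fintype Ω] (μ : Ω → ℝ) {n : ℕ} (x : Fin n → Ω) : ℝ :=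
  ∏ i, μ (x i)

/-- The `ℓ_p` norm of `f : Ω^n → ℝ` with respect to the product measure `μ^{⊗n}`. -/
noncomputable def lpNormW {Ω : Type} [Fintype Ω] (μ : Ω → ℝ) {n : ℕ} (p : ℝ)
    (f : (Fin n → Ω) → ℝ) : ℝ :=
  (∑ x : Fin n → Ω, prodW μ x * |f x| ^ p) ^ (1 / p)

/-- Single-coordinate noise kernel: keep the value with probability `ρ`, otherwise take a
fresh sample from `μ`. -/
noncomputable def noiseK {Ω : Type} [DecidableEq Ω] (μ : Ω → ℝ) (ρ : ℝ) (a b : Ω) : ℝ :=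
  (if b = a then ρ else 0) + (1 - ρ) * μ b

/-- The noise operator `T_ρ`: `(T_ρ f)(x) = E[f(y)]`, where each coordinate `y_i` equals
`x_i` with probability `ρ` and is a fresh independent sample from `μ` otherwise. -/
noncomputable def noiseOp {Ω : Type} [Fintype Ω] [DecidableEq Ω] (μ : Ω → ℝ) (ρ : ℝ) {n : ℕ}
    (f : (Fin n → Ω) → ℝ) : (Fin n → Ω) → ℝ :=
  fun x => ∑ y : Fin n → Ω, (∏ i, noiseK μ ρ (x i) (y i)) * f y

lemma Lp_sum_le {ι X : Type*} [Fintype X] (s : Finset ι) (F : ι → X → ℝ) {p : ℝ} (hp : 1 ≤ p) :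
    (∑ x : X, |∑ a ∈ s, F a x| ^ p) ^ (1/p) ≤ ∑ a ∈ s, (∑ x : X, |F a x| ^ p) ^ (1/p) := by
  have hp0 : p ≠ 0 := by linarith
  induction s using Finset.cons_induction with
  | empty =>
      simp [Real.zero_rpow hp0, Real.zero_rpow (inv_ne_zero hp0), le_refl]
  | cons a s ha ih =>
      rw [Finset.sum_cons]
      calc (∑ x : X, |∑ b ∈ Finset.cons a s ha, F b x| ^ p) ^ (1/p)
          = (∑ x : X, |F a x + ∑ b ∈ s, F b x| ^ p) ^ (1/p) := by
            simp [Finset.sum_cons]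
        _ ≤ (∑ x : X, |F a x| ^ p) ^ (1/p) + (∑ x : X, |∑ b ∈ s, F b x| ^ p) ^ (1/p) :=
            Real.Lp_add_le _ _ _ hp
        _ ≤ _ := by exact add_le_add_right ih _

lemma rpow_le_one_add (x δ : ℝ) (hx : 0 ≤ x) (hδ0 : 0 ≤ δ) (hδ1 : δ ≤ 1) :
    x ^ δ ≤ 1 + δ * (x - 1) := by
  have h := Real.geom_mean_le_arith_mean2_weighted (by linarith : (0:ℝ) ≤ 1 - δ) hδ0
    (zero_le_one) hx (by ring)
  rw [Real.one_rpow] at h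
  nlinarith [h]

lemma abs_le_of_sq_le (x b : ℝ) (hb : 0 ≤ b) (hx : x^2 ≤ b^2) : |x| ≤ b :=
  abs_le.mpr (abs_le_of_sq_le_sq' hx hb)

lemma ptA (m z δ : ℝ) (hm : 0 < m) (hy : 0 < m + z) (hδ0 : 0 ≤ δ) (hδ1 : δ ≤ 1) :
    |m + z| ^ (2+δ) ≤ m ^ δ * ((m+z)^2 + δ * ((m+z)^2 * z / m)) := by
  rw [abs_of_pos hy, Real.rpow_add hy, Real.rpow_two]
  have hyδ : (m+z) ^ δ ≤ m ^ δ * (1 + δ * ((m+z)/m - 1)) := by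
    have hfrac : (m+z) ^ δ = m ^ δ * ((m+z)/m) ^ δ := by
      rw [← Real.mul_rpow hm.le (by positivity), mul_div_cancel₀ _ (ne_of_gt hm)]
    rw [hfrac]
    exact mul_le_mul_of_nonneg_left
      (rpow_le_one_add _ _ (by positivity) hδ0 hδ1) (by positivity)
  calc (m+z) ^ 2 * (m+z) ^ δ ≤ (m+z) ^ 2 * (m ^ δ * (1 + δ * ((m+z)/m - 1))) :=
        mul_le_mul_of_nonneg_left hyδ (by positivity)
    _ = m ^ δ * ((m+z)^2 + δ * ((m+z)^2 * z / m)) := by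
        field_simp
        ring

lemma ptB (x M δ : ℝ) (hx : 0 ≤ x) (hM : x ≤ M) (hδ0 : 0 ≤ δ) :
    x ^ (2+δ) ≤ x^2 * M ^ δ := by
  rw [Real.rpow_add' hx (by linarith), Real.rpow_two]
  exact mul_le_mul_of_nonneg_left (Real.rpow_le_rpow hx hM hδ0) (by positivity)

section HC
variable {Ω : Type} [Fintype Ω] [DecidableEq Ω]

set_option maxHeartbeats 1000000 in
/-- Core of the one-dimensional hypercontractivity inequality, with abstract data. -/
lemma oneDimCore (μ : Ω → ℝ) (h : Ω → ℝ) (γ α δ m σ2 : ℝ)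
    (hμpos : ∀ a, 0 < μ a) (hμsum : ∑ a, μ a = 1)
    (hα0 : 0 < α) (hα1 : α ≤ 1/2)
    (hγ0 : 0 < γ) (hγ1 : γ < 1)
    (hδ0 : 0 < δ) (hδ1 : δ ≤ 1) (hδγ : 5 * δ ≤ 2 * γ)
    (hδB : (1 - γ * (α/(α+4))) * (2/α) ^ (δ/2) ≤ 1)
    (hm : 0 ≤ m)
    (hmean0 : ∑ a, μ a * h a = 0)
    (hσ2 : ∑ a, μ a * (h a)^2 = σ2)
    (hsq : ∀ a, α * (h a)^2 ≤ σ2) :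
    ∑ a, μ a * |m + (1-γ) * h a| ^ (2+δ) ≤ (m^2 + σ2) ^ ((2+δ)/2) := by
  have hσ2nn : 0 ≤ σ2 := by
    rw [← hσ2]
    exact Finset.sum_nonneg fun a _ => mul_nonneg (hμpos a).le (sq_nonneg _)
  set ρ : ℝ := 1 - γ with hρ
  have hρ0 : 0 ≤ ρ := by simp only [hρ]; linarith
  have hρ1 : ρ ≤ 1 := by simp only [hρ]; linarith
  have htnn : 0 ≤ m^2 + σ2 := by positivity
  have hy2 : ∑ a, μ a * (m + ρ * h a)^2 = m^2 + ρ^2 * σ2 := by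
    have e : ∀ a, μ a * (m + ρ * h a) ^ 2
        = m^2 * μ a + (2*m*ρ) * (μ a * h a) + ρ^2 * (μ a * (h a)^2) := by
      intro a; ring
    rw [Finset.sum_congr rfl (fun a _ => e a), Finset.sum_add_distrib, Finset.sum_add_distrib,
      ← Finset.mul_sum, ← Finset.mul_sum, ← Finset.mul_sum, hμsum, hmean0, hσ2]
    ring
  have h1ρ2 : γ ≤ 1 - ρ^2 := by simp only [hρ]; nlinarith
  by_cases hcase : 0 < m ∧ 4 * σ2 ≤ α * m^2
  · -- Case A
    obtain ⟨hm0, hA⟩ := hcase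
    have hhb : ∀ a, |h a| ≤ m / 2 := by
      intro a
      apply abs_le_of_sq_le _ _ (by linarith)
      have h3 : α * (h a ^ 2) ≤ α * ((m/2)^2) := by nlinarith [hsq a]
      exact le_of_mul_le_mul_left h3 hα0
    have hypos : ∀ a, 0 < m + ρ * h a := by
      intro a
      have h4 : |ρ * h a| ≤ m/2 := by
        rw [abs_mul, abs_of_nonneg hρ0]
        calc ρ * |h a| ≤ 1 * (m/2) :=
              mul_le_mul hρ1 (hhb a) (abs_nonneg _) zero_le_one
          _ = m/2 := one_mul _
      have := neg_abs_le (ρ * h a)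
      linarith
    have hS3 : ∑ a, μ a * ((h a)^2 * h a) ≤ (m/2) * σ2 := by
      rw [← hσ2, Finset.mul_sum]
      apply Finset.sum_le_sum
      intro a _
      have h1 : (h a)^2 * h a ≤ (h a)^2 * (m/2) := by
        have := hhb a
        nlinarith [le_abs_self (h a), sq_nonneg (h a)]
      calc μ a * ((h a)^2 * h a) ≤ μ a * ((h a)^2 * (m/2)) :=
            mul_le_mul_of_nonneg_left h1 (hμpos a).le
        _ = m/2 * (μ a * (h a)^2) := by ring
    have hsum1 : ∑ a, μ a * |m + ρ * h a| ^ (2+δ)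
        ≤ m ^ δ * ((m^2 + ρ^2*σ2)
            + δ/m * ((2*ρ^2*m)*σ2 + ρ^3 * ∑ a, μ a * ((h a)^2 * h a))) := by
      have step1 : ∑ a, μ a * |m + ρ * h a| ^ (2+δ)
          ≤ ∑ a, μ a * (m ^ δ * ((m + ρ * h a)^2 + δ * ((m + ρ * h a)^2 * (ρ * h a) / m))) :=
        Finset.sum_le_sum fun a _ => mul_le_mul_of_nonneg_left
          (ptA m (ρ * h a) δ hm0 (hypos a) hδ0.le hδ1) (hμpos a).le
      refine step1.trans (le_of_eq ?_)
      have expand : ∀ a, μ a * (m ^ δ * ((m + ρ * h a)^2 + δ * ((m + ρ * h a)^2 * (ρ * h a) / m)))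
          = m ^ δ * (μ a * (m + ρ * h a)^2)
            + (m ^ δ * (δ/m)) * ((m^2*ρ) * (μ a * h a) + (2*m*ρ^2) * (μ a * (h a)^2)
                + ρ^3 * (μ a * ((h a)^2 * h a))) := by
        intro a
        field_simp
        ring
      rw [Finset.sum_congr rfl (fun a _ => expand a), Finset.sum_add_distrib,
        ← Finset.mul_sum, hy2, ← Finset.mul_sum]
      rw [Finset.sum_add_distrib, Finset.sum_add_distrib, ← Finset.mul_sum, ← Finset.mul_sum,
        ← Finset.mul_sum, hmean0, hσ2]
      ring
    have hrho3 : ρ^3 * (∑ a, μ a * ((h a)^2 * h a)) ≤ (m/2) * σ2 := by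
      rcases le_or_gt 0 (∑ a, μ a * ((h a)^2 * h a)) with hs | hs
      · calc ρ^3 * (∑ a, μ a * ((h a)^2 * h a)) ≤ 1 * (∑ a, μ a * ((h a)^2 * h a)) := by
              apply mul_le_mul_of_nonneg_right _ hs
              nlinarith
          _ ≤ (m/2) * σ2 := by rw [one_mul]; exact hS3
      · have hx : ρ^3 * (∑ a, μ a * ((h a)^2 * h a)) ≤ 0 :=
          mul_nonpos_of_nonneg_of_nonpos (by positivity) hs.le
        have hc2 : (0:ℝ) ≤ (m/2) * σ2 := by positivity
        exact hx.trans hc2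
    have hinner : (m^2 + ρ^2*σ2)
        + δ/m * ((2*ρ^2*m)*σ2 + ρ^3 * ∑ a, μ a * ((h a)^2 * h a)) ≤ m^2 + σ2 := by
      have h2 : δ/m * ((2*ρ^2*m)*σ2 + ρ^3 * ∑ a, μ a * ((h a)^2 * h a))
          ≤ δ/m * ((2*ρ^2*m)*σ2 + (m/2)*σ2) :=
        mul_le_mul_of_nonneg_left (by linarith [hrho3]) (by positivity)
      have h3 : δ/m * ((2*ρ^2*m)*σ2 + (m/2)*σ2) = (2*ρ^2 + 1/2) * δ * σ2 := by
        field_simp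
      rw [h3] at h2
      have h4 : (2*ρ^2 + 1/2) * δ * σ2 ≤ (1 - ρ^2) * σ2 := by
        apply mul_le_mul_of_nonneg_right _ hσ2nn
        have hρ2le : ρ^2 ≤ 1 := by nlinarith
        have hδρ : δ * ρ^2 ≤ δ * 1 := mul_le_mul_of_nonneg_left hρ2le hδ0.le
        nlinarith
      nlinarith
    have hfin : m ^ δ * (m^2 + σ2) ≤ (m^2 + σ2) ^ ((2+δ)/2) := by
      have hmδ : m ^ δ ≤ (m^2 + σ2) ^ (δ/2) := by
        have h5 : m ^ δ = (m^2) ^ (δ/2) := by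
          rw [← Real.rpow_natCast m 2, ← Real.rpow_mul hm0.le]
          congr 1
          push_cast
          ring
        rw [h5]
        exact Real.rpow_le_rpow (by positivity) (by linarith) (by positivity)
      have htpos : 0 < m^2 + σ2 := by positivity
      calc m ^ δ * (m^2 + σ2) ≤ (m^2 + σ2) ^ (δ/2) * (m^2 + σ2) :=
            mul_le_mul_of_nonneg_right hmδ htnn
        _ = (m^2 + σ2) ^ ((2+δ)/2) := by
            nth_rewrite 2 [← Real.rpow_one (m^2+σ2)]
            rw [← Real.rpow_add htpos]
            congr 1
            ring
    calc ∑ a, μ a * |m + ρ * h a| ^ (2+δ) ≤ m ^ δ * (m^2 + σ2) :=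
          hsum1.trans (mul_le_mul_of_nonneg_left hinner (by positivity))
      _ ≤ (m^2 + σ2) ^ ((2+δ)/2) := hfin
  · -- Case B
    have hB : α * m^2 ≤ 4 * σ2 := by
      rcases eq_or_lt_of_le hm with hm0 | hm0
      · rw [← hm0]; nlinarith
      · push_neg at hcase
        nlinarith [hcase hm0]
    have hHbnn : 0 ≤ Real.sqrt (σ2/α) := Real.sqrt_nonneg _
    set Hb : ℝ := Real.sqrt (σ2/α) with hHb
    have hHb2 : Hb^2 = σ2/α := Real.sq_sqrt (by positivity)
    have habs : ∀ a, |m + ρ * h a| ≤ m + Hb := by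
      intro a
      have h6 : |h a| ≤ Hb := by
        rw [hHb, ← Real.sqrt_sq_eq_abs]
        apply Real.sqrt_le_sqrt
        rw [le_div_iff₀ hα0]
        linarith [hsq a]
      calc |m + ρ * h a| ≤ |m| + |ρ * h a| := abs_add_le _ _
        _ = m + ρ * |h a| := by rw [abs_of_nonneg hm, abs_mul, abs_of_nonneg hρ0]
        _ ≤ m + 1 * Hb := by
            have : ρ * |h a| ≤ 1 * Hb := mul_le_mul hρ1 h6 (abs_nonneg _) zero_le_one
            linarith
        _ = m + Hb := by ring
    have hsumB : ∑ a, μ a * |m + ρ * h a| ^ (2+δ) ≤ (m^2 + ρ^2*σ2) * (m+Hb) ^ δ := by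
      calc ∑ a, μ a * |m + ρ * h a| ^ (2+δ)
          ≤ ∑ a, μ a * ((m + ρ * h a)^2 * (m+Hb) ^ δ) := by
            apply Finset.sum_le_sum
            intro a _
            refine mul_le_mul_of_nonneg_left ?_ (hμpos a).le
            have := ptB (|m + ρ * h a|) (m+Hb) δ (abs_nonneg _) (habs a) hδ0.le
            rwa [sq_abs] at this
        _ = (∑ a, μ a * (m + ρ * h a)^2) * (m+Hb) ^ δ := by
            rw [Finset.sum_mul]
            exact Finset.sum_congr rfl fun a _ => by ring
        _ = (m^2 + ρ^2*σ2) * (m+Hb) ^ δ := by rw [hy2]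
    have hM2 : (m+Hb)^2 ≤ (2/α) * (m^2 + σ2) := by
      have h7 : 2 * m^2 ≤ (2/α) * m^2 := by
        apply mul_le_mul_of_nonneg_right _ (sq_nonneg m)
        rw [le_div_iff₀ hα0]; nlinarith
      have h8 : 2 * Hb^2 = (2/α) * σ2 := by
        rw [hHb2]; field_simp
      nlinarith [sq_nonneg (m - Hb)]
    have hMδ : (m+Hb) ^ δ ≤ (2/α) ^ (δ/2) * (m^2 + σ2) ^ (δ/2) := by
      have h10 : (m+Hb) ^ δ = ((m+Hb)^2) ^ (δ/2) := by
        rw [← Real.rpow_natCast (m+Hb) 2, ← Real.rpow_mul (by linarith)]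
        congr 1
        push_cast
        ring
      rw [h10, ← Real.mul_rpow (by positivity) htnn]
      exact Real.rpow_le_rpow (sq_nonneg _) hM2 (by positivity)
    have hκpos : 0 < 1 - γ * (α/(α+4)) := by
      have hfr : α/(α+4) < 1 := by rw [div_lt_one (by linarith)]; linarith
      nlinarith
    have hκ : m^2 + ρ^2*σ2 ≤ (1 - γ * (α/(α+4))) * (m^2 + σ2) := by
      have h11 : α/(α+4) * (m^2 + σ2) ≤ σ2 := by
        rw [div_mul_eq_mul_div, div_le_iff₀ (by linarith)]
        nlinarith
      have h12 : γ * (α/(α+4) * (m^2+σ2)) ≤ (1 - ρ^2) * σ2 :=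
        mul_le_mul h1ρ2 h11 (by positivity) (by linarith)
      nlinarith
    calc ∑ a, μ a * |m + ρ * h a| ^ (2+δ)
        ≤ (m^2 + ρ^2*σ2) * (m+Hb) ^ δ := hsumB
      _ ≤ ((1 - γ * (α/(α+4))) * (m^2+σ2)) * ((2/α) ^ (δ/2) * (m^2+σ2) ^ (δ/2)) := by
          apply mul_le_mul hκ hMδ (by positivity) (by positivity)
      _ = ((1 - γ * (α/(α+4))) * (2/α) ^ (δ/2)) * ((m^2+σ2) ^ (δ/2) * (m^2+σ2)) := by ring
      _ ≤ 1 * ((m^2+σ2) ^ (δ/2) * (m^2+σ2)) := by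
          apply mul_le_mul_of_nonneg_right hδB
          have := Real.rpow_nonneg htnn (δ/2)
          positivity
      _ = (m^2+σ2) ^ ((2+δ)/2) := by
          rw [one_mul]
          nth_rewrite 2 [← Real.rpow_one (m^2+σ2)]
          rw [← Real.rpow_add' htnn (by positivity : δ/2 + 1 ≠ 0)]
          congr 1
          ring

lemma noiseK_sum (μ : Ω → ℝ) (γ : ℝ) (v : Ω → ℝ) (a : Ω) :
    ∑ b, noiseK μ (1-γ) a b * v b
      = (∑ b, μ b * v b) + (1-γ) * (v a - ∑ b, μ b * v b) := by
  simp only [noiseK, add_mul, Finset.sum_add_distrib, ite_mul, zero_mul]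
  rw [Finset.sum_ite_eq' Finset.univ a (fun b => (1-γ) * v b)]
  simp only [Finset.mem_univ, if_true]
  have : ∑ b, (1 - (1-γ)) * μ b * v b = γ * ∑ b, μ b * v b := by
    rw [Finset.mul_sum]
    exact Finset.sum_congr rfl fun b _ => by ring
  rw [this]
  ring

lemma oneDimPos (μ : Ω → ℝ) (γ α δ : ℝ)
    (hμpos : ∀ a, 0 < μ a) (hμsum : ∑ a, μ a = 1) (hmin : ∀ a, α ≤ μ a)
    (hα0 : 0 < α) (hα1 : α ≤ 1/2) (hγ0 : 0 < γ) (hγ1 : γ < 1)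
    (hδ0 : 0 < δ) (hδ1 : δ ≤ 1) (hδγ : 5 * δ ≤ 2 * γ)
    (hδB : (1 - γ * (α/(α+4))) * (2/α) ^ (δ/2) ≤ 1)
    (v : Ω → ℝ) (hm : 0 ≤ ∑ b, μ b * v b) :
    ∑ a, μ a * |(∑ b, μ b * v b) + (1-γ) * (v a - ∑ b, μ b * v b)| ^ (2+δ)
      ≤ (∑ a, μ a * v a ^ 2) ^ ((2+δ)/2) := by
  have hmean0 : ∑ a, μ a * (v a - ∑ b, μ b * v b) = 0 := by
    simp only [mul_sub, Finset.sum_sub_distrib, ← Finset.sum_mul, hμsum, one_mul, sub_self]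
  have hsq : ∀ a, α * (v a - ∑ b, μ b * v b)^2 ≤ ∑ c, μ c * (v c - ∑ b, μ b * v b)^2 := by
    intro a
    have h1 : μ a * (v a - ∑ b, μ b * v b)^2 ≤ ∑ c, μ c * (v c - ∑ b, μ b * v b)^2 :=
      Finset.single_le_sum (f := fun c => μ c * (v c - ∑ b, μ b * v b)^2)
        (fun c _ => mul_nonneg (hμpos c).le (sq_nonneg _)) (Finset.mem_univ a)
    nlinarith [hmin a, sq_nonneg (v a - ∑ b, μ b * v b)]
  have hv2 : ∑ a, μ a * v a ^ 2
      = (∑ b, μ b * v b)^2 + ∑ c, μ c * (v c - ∑ b, μ b * v b)^2 := by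
    have e : ∀ a, μ a * v a ^ 2
        = (∑ b, μ b * v b)^2 * μ a + (2 * ∑ b, μ b * v b) * (μ a * (v a - ∑ b, μ b * v b))
          + μ a * (v a - ∑ b, μ b * v b)^2 := by
      intro a; ring
    rw [Finset.sum_congr rfl (fun a _ => e a), Finset.sum_add_distrib, Finset.sum_add_distrib,
      ← Finset.mul_sum, ← Finset.mul_sum, hμsum, hmean0]
    ring
  rw [hv2]
  exact oneDimCore μ (fun a => v a - ∑ b, μ b * v b) γ α δ _ _ hμpos hμsum hα0 hα1 hγ0 hγ1
    hδ0 hδ1 hδγ hδB hm hmean0 rfl hsq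

lemma oneDim (μ : Ω → ℝ) (γ α δ : ℝ)
    (hμpos : ∀ a, 0 < μ a) (hμsum : ∑ a, μ a = 1) (hmin : ∀ a, α ≤ μ a)
    (hα0 : 0 < α) (hα1 : α ≤ 1/2) (hγ0 : 0 < γ) (hγ1 : γ < 1)
    (hδ0 : 0 < δ) (hδ1 : δ ≤ 1) (hδγ : 5 * δ ≤ 2 * γ)
    (hδB : (1 - γ * (α/(α+4))) * (2/α) ^ (δ/2) ≤ 1)
    (v : Ω → ℝ) :
    ∑ a, μ a * |∑ b, noiseK μ (1-γ) a b * v b| ^ (2+δ)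
      ≤ (∑ a, μ a * v a ^ 2) ^ ((2+δ)/2) := by
  simp only [noiseK_sum]
  rcases le_or_gt 0 (∑ b, μ b * v b) with hm | hm
  · exact oneDimPos μ γ α δ hμpos hμsum hmin hα0 hα1 hγ0 hγ1 hδ0 hδ1 hδγ hδB v hm
  · have hneg := oneDimPos μ γ α δ hμpos hμsum hmin hα0 hα1 hγ0 hγ1 hδ0 hδ1 hδγ hδB
      (fun a => -v a) (by
        simp only [mul_neg, Finset.sum_neg_distrib]
        linarith)
    simp only [mul_neg, Finset.sum_neg_distrib, neg_sq] at hneg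
    have e : ∀ a, |-(∑ b, μ b * v b) + (1-γ) * (-v a - -(∑ b, μ b * v b))|
        = |(∑ b, μ b * v b) + (1-γ) * (v a - ∑ b, μ b * v b)| := by
      intro a
      rw [← abs_neg]
      congr 1
      ring
    simp only [e] at hneg
    exact hneg

lemma sum_cons_eq {n : ℕ} (F : (Fin (n+1) → Ω) → ℝ) :
    ∑ x : Fin (n+1) → Ω, F x = ∑ a : Ω, ∑ y : Fin n → Ω, F (Fin.cons a y) := by
  rw [← Equiv.sum_comp (Fin.consEquiv (fun _ => Ω)) F, Fintype.sum_prod_type]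
  rfl

lemma prodW_cons {n : ℕ} (μ : Ω → ℝ) (a : Ω) (y : Fin n → Ω) :
    prodW μ (Fin.cons a y) = μ a * prodW μ y := by
  simp [prodW, Fin.prod_univ_succ]

lemma noiseOp_cons {n : ℕ} (μ : Ω → ℝ) (ρ : ℝ) (f : (Fin (n+1) → Ω) → ℝ) (a : Ω)
    (x : Fin n → Ω) :
    noiseOp μ ρ f (Fin.cons a x)
      = ∑ b, noiseK μ ρ a b * noiseOp μ ρ (fun y => f (Fin.cons b y)) x := by
  simp only [noiseOp]
  rw [sum_cons_eq]
  apply Finset.sum_congr rfl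
  intro b _
  rw [Finset.mul_sum]
  apply Finset.sum_congr rfl
  intro z _
  rw [Fin.prod_univ_succ]
  simp only [Fin.cons_zero, Fin.cons_succ]
  ring

set_option maxHeartbeats 1000000 in
lemma tensor (μ : Ω → ℝ) (γ α δ : ℝ)
    (hμpos : ∀ a, 0 < μ a) (hμsum : ∑ a, μ a = 1) (hmin : ∀ a, α ≤ μ a)
    (hα0 : 0 < α) (hα1 : α ≤ 1/2) (hγ0 : 0 < γ) (hγ1 : γ < 1)
    (hδ0 : 0 < δ) (hδ1 : δ ≤ 1) (hδγ : 5 * δ ≤ 2 * γ)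
    (hδB : (1 - γ * (α/(α+4))) * (2/α) ^ (δ/2) ≤ 1) :
    ∀ (n : ℕ) (f : (Fin n → Ω) → ℝ),
      ∑ x : Fin n → Ω, prodW μ x * |noiseOp μ (1-γ) f x| ^ (2+δ)
        ≤ (∑ x : Fin n → Ω, prodW μ x * f x ^ 2) ^ ((2+δ)/2) := by
  have hp1 : 1 ≤ (2+δ)/2 := by linarith
  have hppos : (0:ℝ) < (2+δ)/2 := by linarith
  have hp0 : (2+δ)/2 ≠ 0 := ne_of_gt hppos
  have hq0 : (0:ℝ) < 2+δ := by linarith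
  intro n
  induction n with
  | zero =>
      intro f
      have huniq : ∀ (F : (Fin 0 → Ω) → ℝ), ∑ x : Fin 0 → Ω, F x = F (fun i => i.elim0) := by
        intro F
        rw [Fintype.sum_unique]
        exact congrArg F (Subsingleton.elim _ _)
      have hW : prodW μ (fun i : Fin 0 => i.elim0) = 1 := by
        simp [prodW]
      have hT : noiseOp μ (1-γ) f (fun i : Fin 0 => i.elim0) = f (fun i => i.elim0) := by
        rw [noiseOp, huniq (fun y => (∏ i, noiseK μ (1-γ) ((fun i : Fin 0 => i.elim0) i) (y i)) * f y)]
        simp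
      rw [huniq (fun x => prodW μ x * |noiseOp μ (1-γ) f x| ^ (2+δ)),
        huniq (fun x => prodW μ x * f x ^ 2), hW, hT, one_mul, one_mul]
      rw [← sq_abs (f _), ← Real.rpow_natCast |f _| 2, ← Real.rpow_mul (abs_nonneg _)]
      rw [show ((2:ℕ):ℝ) * ((2+δ)/2) = 2+δ by push_cast; ring]
  | succ n ih =>
      intro f
      set ρ : ℝ := 1 - γ with hρdef
      set W : (Fin n → Ω) → ℝ := prodW μ with hWdef
      have hWnn : ∀ y, 0 ≤ W y := fun y => Finset.prod_nonneg fun i _ => (hμpos (y i)).le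
      set g : Ω → (Fin n → Ω) → ℝ := fun b => noiseOp μ ρ (fun y => f (Fin.cons b y)) with hgdef
      -- rewrite LHS
      have lhs_eq : ∑ x : Fin (n+1) → Ω, prodW μ x * |noiseOp μ ρ f x| ^ (2+δ)
          = ∑ y : Fin n → Ω, W y * ∑ a, μ a * |∑ b, noiseK μ ρ a b * g b y| ^ (2+δ) := by
        rw [sum_cons_eq (fun x => prodW μ x * |noiseOp μ ρ f x| ^ (2+δ))]
        rw [Finset.sum_comm]
        apply Finset.sum_congr rfl
        intro y _
        rw [Finset.mul_sum]
        apply Finset.sum_congr rfl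
        intro a _
        rw [prodW_cons, noiseOp_cons]
        ring
      -- rewrite RHS base
      have rhs_eq : ∑ x : Fin (n+1) → Ω, prodW μ x * f x ^ 2
          = ∑ a, μ a * ∑ y : Fin n → Ω, W y * f (Fin.cons a y) ^ 2 := by
        rw [sum_cons_eq (fun x => prodW μ x * f x ^ 2)]
        apply Finset.sum_congr rfl
        intro a _
        rw [Finset.mul_sum]
        apply Finset.sum_congr rfl
        intro y _
        rw [prodW_cons]
        ring
      rw [lhs_eq, rhs_eq]
      -- step 1: one-dimensional bound inside
      have step1 : ∑ y : Fin n → Ω, W y * ∑ a, μ a * |∑ b, noiseK μ ρ a b * g b y| ^ (2+δ)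
          ≤ ∑ y : Fin n → Ω, W y * (∑ a, μ a * (g a y) ^ 2) ^ ((2+δ)/2) :=
        Finset.sum_le_sum fun y _ => mul_le_mul_of_nonneg_left
          (oneDim μ γ α δ hμpos hμsum hmin hα0 hα1 hγ0 hγ1 hδ0 hδ1 hδγ hδB (fun b => g b y))
          (hWnn y)
      refine step1.trans ?_
      -- step 2: Minkowski + IH
      set p : ℝ := (2+δ)/2 with hpdef
      set F : Ω → (Fin n → Ω) → ℝ := fun a y => μ a * (g a y)^2 * (W y) ^ (1/p) with hFdef
      have hFnn : ∀ a y, 0 ≤ F a y := fun a y =>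
        mul_nonneg (mul_nonneg (hμpos a).le (sq_nonneg _)) (Real.rpow_nonneg (hWnn y) _)
      have hA_eq : ∑ y : Fin n → Ω, W y * (∑ a, μ a * (g a y) ^ 2) ^ p
          = ∑ y : Fin n → Ω, |∑ a, F a y| ^ p := by
        apply Finset.sum_congr rfl
        intro y _
        have hSnn : 0 ≤ ∑ a, μ a * (g a y)^2 :=
          Finset.sum_nonneg fun a _ => mul_nonneg (hμpos a).le (sq_nonneg _)
        have hsumF : ∑ a, F a y = (∑ a, μ a * (g a y)^2) * (W y) ^ (1/p) := by
          rw [Finset.sum_mul]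
        rw [hsumF, abs_of_nonneg (mul_nonneg hSnn (Real.rpow_nonneg (hWnn y) _)),
          Real.mul_rpow hSnn (Real.rpow_nonneg (hWnn y) _),
          ← Real.rpow_mul (hWnn y), one_div, inv_mul_cancel₀ hp0,
          Real.rpow_one]
        ring
      rw [hA_eq]
      -- conclude via rpow
      have hAnn : 0 ≤ ∑ y : Fin n → Ω, |∑ a, F a y| ^ p :=
        Finset.sum_nonneg fun y _ => Real.rpow_nonneg (abs_nonneg _) _
      have hBnn : 0 ≤ ∑ a, μ a * ∑ y : Fin n → Ω, W y * f (Fin.cons a y) ^ 2 :=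
        Finset.sum_nonneg fun a _ => mul_nonneg (hμpos a).le
          (Finset.sum_nonneg fun y _ => mul_nonneg (hWnn y) (sq_nonneg _))
      have key : (∑ y : Fin n → Ω, |∑ a, F a y| ^ p) ^ (1/p)
          ≤ ∑ a, μ a * ∑ y : Fin n → Ω, W y * f (Fin.cons a y) ^ 2 := by
        refine (Lp_sum_le Finset.univ F hp1).trans ?_
        apply Finset.sum_le_sum
        intro a _
        have hFa : ∀ y, |F a y| ^ p = μ a ^ p * (W y * |g a y| ^ (2+δ)) := by
          intro y
          rw [abs_of_nonneg (hFnn a y)]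
          rw [Real.mul_rpow (mul_nonneg (hμpos a).le (sq_nonneg _)) (Real.rpow_nonneg (hWnn y) _),
            Real.mul_rpow (hμpos a).le (sq_nonneg _),
            ← Real.rpow_mul (hWnn y), one_div, inv_mul_cancel₀ hp0,
            Real.rpow_one]
          rw [← sq_abs (g a y), ← Real.rpow_natCast |g a y| 2, ← Real.rpow_mul (abs_nonneg _)]
          rw [show ((2:ℕ):ℝ) * p = 2+δ by rw [hpdef]; push_cast; ring]
          ring
        have hsum_eq : ∑ y : Fin n → Ω, |F a y| ^ p
            = μ a ^ p * ∑ y : Fin n → Ω, W y * |g a y| ^ (2+δ) := by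
          rw [Finset.mul_sum]
          exact Finset.sum_congr rfl fun y _ => hFa y
        rw [hsum_eq]
        have hIH := ih (fun y => f (Fin.cons a y))
        have hC : 0 ≤ ∑ y : Fin n → Ω, W y * f (Fin.cons a y) ^ 2 :=
          Finset.sum_nonneg fun y _ => mul_nonneg (hWnn y) (sq_nonneg _)
        have hSx : 0 ≤ ∑ y : Fin n → Ω, W y * |g a y| ^ (2+δ) :=
          Finset.sum_nonneg fun y _ =>
            mul_nonneg (hWnn y) (Real.rpow_nonneg (abs_nonneg _) _)
        calc (μ a ^ p * ∑ y : Fin n → Ω, W y * |g a y| ^ (2+δ)) ^ (1/p)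
            ≤ (μ a ^ p * (∑ y : Fin n → Ω, W y * f (Fin.cons a y) ^ 2) ^ p) ^ (1/p) := by
              apply Real.rpow_le_rpow
                (mul_nonneg (Real.rpow_nonneg (hμpos a).le _) hSx) _
                (one_div_nonneg.mpr hppos.le)
              exact mul_le_mul_of_nonneg_left hIH (Real.rpow_nonneg (hμpos a).le _)
          _ = μ a * ∑ y : Fin n → Ω, W y * f (Fin.cons a y) ^ 2 := by
              rw [← Real.mul_rpow (hμpos a).le hC,
                ← Real.rpow_mul (mul_nonneg (hμpos a).le hC),
                mul_one_div, div_self hp0, Real.rpow_one]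
      calc ∑ y : Fin n → Ω, |∑ a, F a y| ^ p
          = ((∑ y : Fin n → Ω, |∑ a, F a y| ^ p) ^ (1/p)) ^ p := by
            rw [← Real.rpow_mul hAnn, one_div, inv_mul_cancel₀ hp0,
              Real.rpow_one]
        _ ≤ (∑ a, μ a * ∑ y : Fin n → Ω, W y * f (Fin.cons a y) ^ 2) ^ p :=
            Real.rpow_le_rpow (Real.rpow_nonneg hAnn _) key hppos.le

end HC

/-- hypercontractivity of the noise operator, reverse-parameter form.
For every finite probability space with all atoms of positive probability, minimum atom
probability `α ≤ 1/2`, and every `γ ∈ (0,1)`, there is `δ > 0` depending only on `γ` and `α`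
such that `‖T_{1-γ} f‖_{2+δ} ≤ ‖f‖₂` for every `n ≥ 1` and every `f : Ω^n → ℝ`. -/
theorem hypercontractivity (γ α : ℝ) (hγ0 : 0 < γ) (hγ1 : γ < 1)
    (hα0 : 0 < α) (hα : α ≤ 1 / 2) :
    ∃ δ : ℝ, 0 < δ ∧
      ∀ (Ω : Type) [Fintype Ω] [DecidableEq Ω] (μ : Ω → ℝ),
        (∀ a, 0 < μ a) → (∑ a, μ a = 1) →
        (∀ a, α ≤ μ a) → (∃ a, μ a = α) →
        ∀ (n : ℕ), 1 ≤ n → ∀ f : (Fin n → Ω) → ℝ,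
          lpNormW μ (2 + δ) (noiseOp μ (1 - γ) f) ≤ lpNormW μ 2 f := by
  have hα4 : (0:ℝ) < α + 4 := by linarith
  have hfr1 : α/(α+4) < 1 := by rw [div_lt_one hα4]; linarith
  have hfr0 : 0 < α/(α+4) := by positivity
  have hκpos : 0 < 1 - γ*(α/(α+4)) := by nlinarith
  have hκlt1 : 1 - γ*(α/(α+4)) < 1 := by nlinarith
  have h2α : (1:ℝ) < 2/α := by rw [lt_div_iff₀ hα0]; linarith
  have hlog2α : 0 < Real.log (2/α) := Real.log_pos h2α
  have hlogκ : 0 < -Real.log (1 - γ*(α/(α+4))) := by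
    have := Real.log_neg hκpos hκlt1
    linarith
  set δ : ℝ := min (γ/3) (min 1 ((-Real.log (1 - γ*(α/(α+4))))/(Real.log (2/α)))) with hδdef
  have hδ0 : 0 < δ := lt_min (by linarith) (lt_min one_pos (div_pos hlogκ hlog2α))
  have hδ1 : δ ≤ 1 := le_trans (min_le_right _ _) (min_le_left _ _)
  have hδγ : 5 * δ ≤ 2 * γ := by
    have h1 : δ ≤ γ/3 := min_le_left _ _
    linarith
  have hδB : (1 - γ*(α/(α+4))) * (2/α) ^ (δ/2) ≤ 1 := by
    have hδle : δ ≤ (-Real.log (1 - γ*(α/(α+4))))/(Real.log (2/α)) :=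
      le_trans (min_le_right _ _) (min_le_right _ _)
    have h1 : δ * Real.log (2/α) ≤ -Real.log (1 - γ*(α/(α+4))) :=
      (le_div_iff₀ hlog2α).mp hδle
    have h2 : Real.log (2/α) * (δ/2) ≤ -Real.log (1 - γ*(α/(α+4))) := by linarith
    calc (1 - γ*(α/(α+4))) * (2/α) ^ (δ/2)
        = (1 - γ*(α/(α+4))) * Real.exp (Real.log (2/α) * (δ/2)) := by
          rw [Real.rpow_def_of_pos (by positivity : (0:ℝ) < 2/α)]
      _ ≤ (1 - γ*(α/(α+4))) * Real.exp (-Real.log (1 - γ*(α/(α+4)))) :=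
          mul_le_mul_of_nonneg_left (Real.exp_le_exp.mpr h2) hκpos.le
      _ = 1 := by
          rw [Real.exp_neg, Real.exp_log hκpos, mul_inv_cancel₀ (ne_of_gt hκpos)]
  refine ⟨δ, hδ0, ?_⟩
  intro Ω _ _ μ hμpos hμsum hmin _hex n _hn f
  have htensor := tensor μ γ α δ hμpos hμsum hmin hα0 hα hγ0 hγ1 hδ0 hδ1 hδγ hδB n f
  have hq0 : (0:ℝ) < 2 + δ := by linarith
  unfold lpNormW
  have hB : ∑ x : Fin n → Ω, prodW μ x * |f x| ^ (2:ℝ)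
      = ∑ x : Fin n → Ω, prodW μ x * f x ^ 2 :=
    Finset.sum_congr rfl fun x _ => by rw [Real.rpow_two, sq_abs]
  rw [hB]
  have hWnn : ∀ x : Fin n → Ω, (0:ℝ) ≤ prodW μ x := fun x =>
    Finset.prod_nonneg fun i _ => (hμpos (x i)).le
  have hSnn : 0 ≤ ∑ x : Fin n → Ω, prodW μ x * |noiseOp μ (1-γ) f x| ^ (2+δ) :=
    Finset.sum_nonneg fun x _ => mul_nonneg (hWnn x) (Real.rpow_nonneg (abs_nonneg _) _)
  have hBnn : 0 ≤ ∑ x : Fin n → Ω, prodW μ x * f x ^ 2 :=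
    Finset.sum_nonneg fun x _ => mul_nonneg (hWnn x) (sq_nonneg _)
  calc (∑ x : Fin n → Ω, prodW μ x * |noiseOp μ (1-γ) f x| ^ (2+δ)) ^ (1/(2+δ))
      ≤ ((∑ x : Fin n → Ω, prodW μ x * f x ^ 2) ^ ((2+δ)/2)) ^ (1/(2+δ)) :=
        Real.rpow_le_rpow hSnn htensor (by positivity)
    _ = (∑ x : Fin n → Ω, prodW μ x * f x ^ 2) ^ ((1:ℝ)/2) := by
        rw [← Real.rpow_mul hBnn]
        congr 1
        field_simp

end OCSPPaper
end
end

section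
/- Fix an ordering predicate P ⊆ S_m, finite sets Q_1, Q_2 ⊆ ℤ, an integer 1 ≤ t < m, a probability distribution D on Q_1^t × Q_2^{m−t}, finite label sets L_0 and R_0, a map π : R_0 → L_0, and γ ∈ (0,1). Fix i ∈ R_0 and define g : Q_2^{R_0} → ℤ by g(y) = y_i and f : Q_1^{L_0} → ℤ by f(x) = x_{π(i)}. Then the acceptance probability satisfies acc_{f,g}(D^γ_π) ≥ E_{a∼D}[P(a)] − γ·m, where P(a) is the extension of P evaluated at the m-tuple a of integers. -/
open Classical Finset

noncomputable section
namespace OCSPPaper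

/-- A permutation `σ` is compatible with the tuple `a` if `σ i < σ j` whenever `a i < a j`. -/
def compatiblePerm {m : ℕ} (a : Fin m → ℤ) (σ : Equiv.Perm (Fin m)) : Prop :=
  ∀ i j : Fin m, a i < a j → σ i < σ j

/-- The extension of an ordering predicate `P ⊆ S_m` to arbitrary integer tuples:
the fraction of compatible permutations that belong to `P`. -/
noncomputable def extPred {m : ℕ} (P : Finset (Equiv.Perm (Fin m))) (a : Fin m → ℤ) : ℝ :=
  ((Finset.univ.filter fun σ => compatiblePerm a σ ∧ σ ∈ P).card : ℝ) /
    ((Finset.univ.filter fun σ => compatiblePerm a σ).card : ℝ)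

/-- Marginal of a density `D` on the first block of `t` coordinates. -/
noncomputable def margFst {t s : ℕ} {Q1 Q2 : Finset ℤ}
    (D : (Fin t → ↥Q1) × (Fin s → ↥Q2) → ℝ) (x : Fin t → ↥Q1) : ℝ :=
  ∑ y : Fin s → ↥Q2, D (x, y)

/-- Marginal of a density `D` on the last block of `s` coordinates. -/
noncomputable def margSnd {t s : ℕ} {Q1 Q2 : Finset ℤ}
    (D : (Fin t → ↥Q1) × (Fin s → ↥Q2) → ℝ) (y : Fin s → ↥Q2) : ℝ :=
  ∑ x : Fin t → ↥Q1, D (x, y)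

/-- Noise kernel: with probability `1-γ` keep the value, with probability `γ` resample
uniformly. -/
noncomputable def unifNoise (γ : ℝ) {α : Type*} [Fintype α] [DecidableEq α] (a b : α) : ℝ :=
  (1 - γ) * (if b = a then 1 else 0) + γ * (1 / (Fintype.card α : ℝ))

/-- Density of the dictatorship-test distribution `D^γ_π`: rows of `X` are sampled from the
first-block marginal of `D`, rows of `Y` from the conditional distribution of the second block
given the first block at the projected coordinate, and then every entry is independently
replaced by a uniform element with probability `γ`. -/
noncomputable def testDensity {t s : ℕ} {Q1 Q2 : Finset ℤ}
    {L0 R0 : Type} [Fintype L0] [Fintype R0] [DecidableEq L0] [DecidableEq R0]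
    (D : (Fin t → ↥Q1) × (Fin s → ↥Q2) → ℝ) (γ : ℝ) (π : R0 → L0)
    (X : Fin t → L0 → ↥Q1) (Y : Fin s → R0 → ↥Q2) : ℝ :=
  ∑ X0 : Fin t → L0 → ↥Q1, ∑ Y0 : Fin s → R0 → ↥Q2,
    ((∏ l : L0, margFst D (fun i => X0 i l)) *
      ∏ r : R0, D (fun i => X0 i (π r), fun j => Y0 j r) / margFst D (fun i => X0 i (π r))) *
    ((∏ i : Fin t, ∏ l : L0, unifNoise γ (X0 i l) (X i l)) *
      ∏ j : Fin s, ∏ r : R0, unifNoise γ (Y0 j r) (Y j r))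

/-- Acceptance probability `acc_{f,g}(D^γ_π)` of a pair of (ordering) tables `f`, `g`. -/
noncomputable def accProb {t s : ℕ} {Q1 Q2 : Finset ℤ}
    {L0 R0 : Type} [Fintype L0] [Fintype R0] [DecidableEq L0] [DecidableEq R0]
    (P : Finset (Equiv.Perm (Fin (t + s))))
    (D : (Fin t → ↥Q1) × (Fin s → ↥Q2) → ℝ) (γ : ℝ) (π : R0 → L0)
    (f : (L0 → ↥Q1) → ℤ) (g : (R0 → ↥Q2) → ℤ) : ℝ :=
  ∑ X : Fin t → L0 → ↥Q1, ∑ Y : Fin s → R0 → ↥Q2,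
    testDensity D γ π X Y * extPred P (Fin.append (fun i => f (X i)) (fun j => g (Y j)))

/-- `E_{a ∼ D}[P(a)]`, the expected (extended) predicate value of a sample from `D`. -/
noncomputable def baseVal {t s : ℕ} {Q1 Q2 : Finset ℤ}
    (P : Finset (Equiv.Perm (Fin (t + s))))
    (D : (Fin t → ↥Q1) × (Fin s → ↥Q2) → ℝ) : ℝ :=
  ∑ p : (Fin t → ↥Q1) × (Fin s → ↥Q2),
    D p * extPred P (Fin.append (fun i => ((p.1 i : ℤ))) (fun j => ((p.2 j : ℤ))))

lemma extPred_nonneg {m : ℕ} (P : Finset (Equiv.Perm (Fin m))) (a : Fin m → ℤ) :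
    0 ≤ extPred P a :=
  div_nonneg (Nat.cast_nonneg _) (Nat.cast_nonneg _)

lemma extPred_le_one {m : ℕ} (P : Finset (Equiv.Perm (Fin m))) (a : Fin m → ℤ) :
    extPred P a ≤ 1 := by
  unfold extPred
  apply div_le_one_of_le₀
  · apply Nat.cast_le.mpr
    apply Finset.card_le_card
    intro σ hσ
    simp only [Finset.mem_filter] at hσ ⊢
    exact ⟨hσ.1, hσ.2.1⟩
  · exact Nat.cast_nonneg _

lemma unifNoise_nonneg {α : Type*} [Fintype α] [DecidableEq α] {γ : ℝ}
    (h0 : 0 ≤ γ) (h1 : γ ≤ 1) (a b : α) : 0 ≤ unifNoise γ a b := by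
  unfold unifNoise
  have hi : (0:ℝ) ≤ if b = a then 1 else 0 := by split <;> norm_num
  have : (0:ℝ) ≤ 1 - γ := by linarith
  have h2 : (0:ℝ) ≤ γ * (1 / (Fintype.card α : ℝ)) := by positivity
  nlinarith [mul_nonneg this hi]

lemma sum_unifNoise {α : Type*} [Fintype α] [DecidableEq α] (γ : ℝ)
    (hc : (Fintype.card α : ℝ) ≠ 0) (a : α) :
    ∑ b : α, unifNoise γ a b = 1 := by
  unfold unifNoise
  rw [Finset.sum_add_distrib, ← Finset.mul_sum,
    Finset.sum_ite_eq' Finset.univ a (fun _ => (1:ℝ)), Finset.sum_const, Finset.card_univ]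
  simp only [Finset.mem_univ, if_pos]
  field_simp
  rw [nsmul_eq_mul, mul_div_assoc', mul_div_cancel_left₀ γ hc]
  ring

lemma sum_fn_prod {α β : Type*} [Fintype α] [DecidableEq α] [Fintype β] (F : α → β → ℝ) :
    ∑ X : α → β, ∏ a, F a (X a) = ∏ a, ∑ b, F a b := by
  classical
  rw [Finset.prod_univ_sum, Fintype.piFinset_univ]

lemma sum_fn_prod_mul {α β : Type*} [Fintype α] [DecidableEq α] [Fintype β]
    (F : α → β → ℝ) (a0 : α) (h : β → ℝ) :
    ∑ X : α → β, (∏ a, F a (X a)) * h (X a0)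
      = (∏ a ∈ ({a0}ᶜ : Finset α), ∑ b, F a b) * ∑ b, F a0 b * h b := by
  classical
  have key : ∑ X : α → β, ∏ a, (F a (X a) * if a = a0 then h (X a) else 1)
      = ∏ a, ∑ b, (F a b * if a = a0 then h b else 1) :=
    sum_fn_prod (fun a b => F a b * if a = a0 then h b else 1)
  have l1 : ∀ X : α → β, (∏ a, (F a (X a) * if a = a0 then h (X a) else 1))
      = (∏ a, F a (X a)) * h (X a0) := by
    intro X
    rw [Finset.prod_mul_distrib, Finset.prod_ite_eq' Finset.univ a0 (fun a => h (X a))]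
    simp
  rw [Fintype.prod_eq_mul_prod_compl a0] at key
  simp only [l1] at key
  rw [key, mul_comm]
  congr 1
  · apply Finset.prod_congr rfl
    intro a ha
    simp only [Finset.mem_compl, Finset.mem_singleton] at ha
    simp [ha]

noncomputable def nKer (γ : ℝ) {α ι κ : Type*} [Fintype α] [DecidableEq α] [DecidableEq κ]
    (a0 : κ) (Z0 : ι → κ → α) (k : ι) (l : κ) (b : α) : ℝ :=
  if l = a0 then (1 - γ) * (if b = Z0 k a0 then 1 else 0) else unifNoise γ (Z0 k l) b

lemma nKer_nonneg {γ : ℝ} (h0 : 0 ≤ γ) (h1 : γ ≤ 1) {α ι κ : Type*} [Fintype α]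
    [DecidableEq α] [DecidableEq κ] (a0 : κ) (Z0 : ι → κ → α) (k : ι) (l : κ) (b : α) :
    0 ≤ nKer γ a0 Z0 k l b := by
  unfold nKer
  split
  · have hi : (0:ℝ) ≤ if b = Z0 k a0 then 1 else 0 := by split <;> norm_num
    have : (0:ℝ) ≤ 1 - γ := by linarith
    exact mul_nonneg this hi
  · exact unifNoise_nonneg h0 h1 _ _

lemma nKer_le {γ : ℝ} (h0 : 0 ≤ γ) {α ι κ : Type*} [Fintype α]
    [DecidableEq α] [DecidableEq κ] (a0 : κ) (Z0 : ι → κ → α) (k : ι) (l : κ) (b : α) :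
    nKer γ a0 Z0 k l b ≤ unifNoise γ (Z0 k l) b := by
  unfold nKer
  split
  · rename_i hl
    subst hl
    unfold unifNoise
    have : (0:ℝ) ≤ γ * (1 / (Fintype.card α : ℝ)) := by positivity
    exact le_add_of_nonneg_right this
  · exact le_refl _

lemma nKer_sum {γ : ℝ} {α ι κ : Type*} [Fintype α] [DecidableEq α] [DecidableEq κ]
    (hc : (Fintype.card α : ℝ) ≠ 0) (a0 : κ) (Z0 : ι → κ → α) (k : ι) (l : κ) :
    ∑ b : α, nKer γ a0 Z0 k l b = if l = a0 then 1 - γ else 1 := by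
  by_cases hl : l = a0
  · simp only [nKer, if_pos hl]
    rw [← Finset.mul_sum, Finset.sum_ite_eq' Finset.univ (Z0 k a0) (fun _ => (1:ℝ))]
    simp
  · simp only [nKer, if_neg hl]
    exact sum_unifNoise γ hc _

lemma nKer_total {γ : ℝ} {α ι κ : Type*} [Fintype α] [DecidableEq α] [Fintype ι]
    [DecidableEq ι] [Fintype κ] [DecidableEq κ]
    (hc : (Fintype.card α : ℝ) ≠ 0) (a0 : κ) (Z0 : ι → κ → α) :
    ∑ Z : ι → κ → α, ∏ k, ∏ l, nKer γ a0 Z0 k l (Z k l) = (1 - γ) ^ (Fintype.card ι) := by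
  refine Eq.trans (sum_fn_prod fun k (w : κ → α) => ∏ l, nKer γ a0 Z0 k l (w l)) ?_
  have hk : ∀ k : ι, (∑ w : κ → α, ∏ l, nKer γ a0 Z0 k l (w l)) = 1 - γ := by
    intro k
    refine Eq.trans (sum_fn_prod fun l (b : α) => nKer γ a0 Z0 k l b) ?_
    rw [Finset.prod_congr rfl fun l _ => nKer_sum hc a0 Z0 k l,
      Finset.prod_ite_eq' Finset.univ a0 (fun _ => (1:ℝ) - γ)]
    simp
  rw [Finset.prod_congr rfl fun k _ => hk k, Finset.prod_const, Finset.card_univ]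

lemma marg_id {t s : ℕ} {Q1 Q2 : Finset ℤ}
    {L0 R0 : Type} [Fintype L0] [Fintype R0] [DecidableEq L0] [DecidableEq R0]
    (D : (Fin t → ↥Q1) × (Fin s → ↥Q2) → ℝ)
    (hDnn : ∀ p, 0 ≤ D p) (hDsum : ∑ p, D p = 1)
    (π : R0 → L0) (i : R0) (h : (Fin t → ↥Q1) → (Fin s → ↥Q2) → ℝ) :
    ∑ X0 : Fin t → L0 → ↥Q1, ∑ Y0 : Fin s → R0 → ↥Q2,
      ((∏ l : L0, margFst D (fun k => X0 k l)) *
        ∏ r : R0, D (fun k => X0 k (π r), fun j => Y0 j r) / margFst D (fun k => X0 k (π r))) *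
        h (fun k => X0 k (π i)) (fun j => Y0 j i)
      = ∑ x : Fin t → ↥Q1, ∑ y : Fin s → ↥Q2, D (x, y) * h x y := by
  classical
  have hM0 : ∀ x : Fin t → ↥Q1, margFst D x = 0 → ∀ y, D (x, y) = 0 := by
    intro x hx y
    have h' := (Finset.sum_eq_zero_iff_of_nonneg (fun y _ => hDnn (x, y))).mp hx
    exact h' y (Finset.mem_univ y)
  have hMsum : (∑ x : Fin t → ↥Q1, margFst D x) = 1 := by
    unfold margFst
    rw [← Fintype.sum_prod_type]
    exact hDsum
  have hCsum : ∀ x : Fin t → ↥Q1, margFst D x ≠ 0 →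
      (∑ y : Fin s → ↥Q2, D (x, y) / margFst D x) = 1 := by
    intro x hx
    rw [← Finset.sum_div]
    exact div_self hx
  have hMD : ∀ (x : Fin t → ↥Q1) (y : Fin s → ↥Q2),
      margFst D x * (D (x, y) / margFst D x) = D (x, y) := by
    intro x y
    by_cases h0 : margFst D x = 0
    · rw [h0, hM0 x h0 y]
      simp
    · rw [mul_comm, div_mul_cancel₀ _ h0]
  have swap1 :
      (∑ X0 : Fin t → L0 → ↥Q1, ∑ Y0 : Fin s → R0 → ↥Q2,
        ((∏ l : L0, margFst D (fun k => X0 k l)) *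
          ∏ r : R0, D (fun k => X0 k (π r), fun j => Y0 j r) /
            margFst D (fun k => X0 k (π r))) *
          h (fun k => X0 k (π i)) (fun j => Y0 j i))
      = ∑ X' : L0 → Fin t → ↥Q1, ∑ Y' : R0 → Fin s → ↥Q2,
        ((∏ l : L0, margFst D (X' l)) *
          ∏ r : R0, D (X' (π r), Y' r) / margFst D (X' (π r))) *
          h (X' (π i)) (Y' i) := by
    refine Fintype.sum_equiv (Equiv.piComm fun _ _ => (↥Q1 : Type)) _ _ fun X0 => ?_
    exact Fintype.sum_equiv (Equiv.piComm fun _ _ => (↥Q2 : Type)) _ _ fun Y0 => rfl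
  rw [swap1]
  have habs : ∀ X' : L0 → Fin t → ↥Q1,
      (∏ l : L0, margFst D (X' l)) *
        (∏ r ∈ ({i}ᶜ : Finset R0), ∑ y : Fin s → ↥Q2, D (X' (π r), y) / margFst D (X' (π r)))
      = ∏ l : L0, margFst D (X' l) := by
    intro X'
    by_cases hz : ∀ r : R0, margFst D (X' (π r)) ≠ 0
    · rw [Finset.prod_congr rfl fun r _ => hCsum (X' (π r)) (hz r), Finset.prod_const_one,
        mul_one]
    · push_neg at hz
      obtain ⟨r, hr⟩ := hz
      rw [Finset.prod_eq_zero (Finset.mem_univ (π r)) hr, zero_mul]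
  have inner : ∀ X' : L0 → Fin t → ↥Q1,
      (∑ Y' : R0 → Fin s → ↥Q2,
        ((∏ l : L0, margFst D (X' l)) *
          ∏ r : R0, D (X' (π r), Y' r) / margFst D (X' (π r))) * h (X' (π i)) (Y' i))
      = (∏ l : L0, margFst D (X' l)) *
          ∑ y : Fin s → ↥Q2, (D (X' (π i), y) / margFst D (X' (π i))) * h (X' (π i)) y := by
    intro X'
    refine Eq.trans (Finset.sum_congr rfl fun Y' _ => mul_assoc _ _ _) ?_
    refine Eq.trans (Finset.mul_sum _ _ _).symm ?_
    refine Eq.trans (congrArg (fun z => (∏ l : L0, margFst D (X' l)) * z)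
      (sum_fn_prod_mul (fun r (y : Fin s → ↥Q2) => D (X' (π r), y) / margFst D (X' (π r))) i
        (fun y => h (X' (π i)) y))) ?_
    refine Eq.trans (mul_assoc _ _ _).symm ?_
    exact congrArg (fun z => z * _) (habs X')
  refine Eq.trans (Finset.sum_congr rfl fun X' _ => inner X') ?_
  refine Eq.trans (sum_fn_prod_mul (fun (_ : L0) (x : Fin t → ↥Q1) => margFst D x) (π i)
    (fun x => ∑ y : Fin s → ↥Q2, (D (x, y) / margFst D x) * h x y)) ?_
  have hone : (∏ l ∈ ({π i}ᶜ : Finset L0), ∑ x : Fin t → ↥Q1, margFst D x) = 1 := by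
    rw [Finset.prod_congr rfl fun l _ => hMsum, Finset.prod_const_one]
  rw [hone, one_mul]
  refine Finset.sum_congr rfl fun x _ => ?_
  rw [Finset.mul_sum]
  refine Finset.sum_congr rfl fun y _ => ?_
  rw [← mul_assoc, hMD x y]

lemma noise_bound {t s : ℕ} {Q1 Q2 : Finset ℤ}
    {L0 R0 : Type} [Fintype L0] [Fintype R0] [DecidableEq L0] [DecidableEq R0]
    (P : Finset (Equiv.Perm (Fin (t + s)))) (π : R0 → L0) (i : R0)
    {γ : ℝ} (hγ0 : 0 ≤ γ) (hγ1 : γ ≤ 1)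
    (hc1 : (Fintype.card ↥Q1 : ℝ) ≠ 0) (hc2 : (Fintype.card ↥Q2 : ℝ) ≠ 0)
    (X0 : Fin t → L0 → ↥Q1) (Y0 : Fin s → R0 → ↥Q2) :
    (1 - γ) ^ (t + s) *
      extPred P (Fin.append (fun k => ((X0 k (π i) : ℤ))) (fun j => ((Y0 j i : ℤ))))
    ≤ ∑ X : Fin t → L0 → ↥Q1, ∑ Y : Fin s → R0 → ↥Q2,
        ((∏ k, ∏ l, unifNoise γ (X0 k l) (X k l)) *
          ∏ j, ∏ r, unifNoise γ (Y0 j r) (Y j r)) *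
          extPred P (Fin.append (fun k => ((X k (π i) : ℤ))) (fun j => ((Y j i : ℤ)))) := by
  classical
  set h0 : ℝ :=
    extPred P (Fin.append (fun k => ((X0 k (π i) : ℤ))) (fun j => ((Y0 j i : ℤ)))) with hh0def
  have hlow : ∀ (X : Fin t → L0 → ↥Q1) (Y : Fin s → R0 → ↥Q2),
      ((∏ k, ∏ l, nKer γ (π i) X0 k l (X k l)) * ∏ j, ∏ r, nKer γ i Y0 j r (Y j r)) * h0
      ≤ ((∏ k, ∏ l, unifNoise γ (X0 k l) (X k l)) *
          ∏ j, ∏ r, unifNoise γ (Y0 j r) (Y j r)) *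
          extPred P (Fin.append (fun k => ((X k (π i) : ℤ))) (fun j => ((Y j i : ℤ)))) := by
    intro X Y
    have hXnn : (0:ℝ) ≤ ∏ k, ∏ l, nKer γ (π i) X0 k l (X k l) :=
      Finset.prod_nonneg fun k _ => Finset.prod_nonneg fun l _ => nKer_nonneg hγ0 hγ1 _ _ _ _ _
    have hYnn : (0:ℝ) ≤ ∏ j, ∏ r, nKer γ i Y0 j r (Y j r) :=
      Finset.prod_nonneg fun j _ => Finset.prod_nonneg fun r _ => nKer_nonneg hγ0 hγ1 _ _ _ _ _
    by_cases hz : ((∏ k, ∏ l, nKer γ (π i) X0 k l (X k l)) *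
        ∏ j, ∏ r, nKer γ i Y0 j r (Y j r)) = 0
    · rw [hz, zero_mul]
      have huXnn : (0:ℝ) ≤ ∏ k, ∏ l, unifNoise γ (X0 k l) (X k l) :=
        Finset.prod_nonneg fun k _ => Finset.prod_nonneg fun l _ => unifNoise_nonneg hγ0 hγ1 _ _
      have huYnn : (0:ℝ) ≤ ∏ j, ∏ r, unifNoise γ (Y0 j r) (Y j r) :=
        Finset.prod_nonneg fun j _ => Finset.prod_nonneg fun r _ => unifNoise_nonneg hγ0 hγ1 _ _
      exact mul_nonneg (mul_nonneg huXnn huYnn) (extPred_nonneg _ _)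
    · have hz' := mul_ne_zero_iff.mp hz
      have hXag : ∀ k, X k (π i) = X0 k (π i) := by
        intro k
        have h1 := Finset.prod_ne_zero_iff.mp
          (Finset.prod_ne_zero_iff.mp hz'.1 k (Finset.mem_univ k)) (π i) (Finset.mem_univ (π i))
        unfold nKer at h1
        rw [if_pos rfl] at h1
        by_contra hne
        rw [if_neg hne, mul_zero] at h1
        exact h1 rfl
      have hYag : ∀ j, Y j i = Y0 j i := by
        intro j
        have h1 := Finset.prod_ne_zero_iff.mp
          (Finset.prod_ne_zero_iff.mp hz'.2 j (Finset.mem_univ j)) i (Finset.mem_univ i)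
        unfold nKer at h1
        rw [if_pos rfl] at h1
        by_contra hne
        rw [if_neg hne, mul_zero] at h1
        exact h1 rfl
      have e1 : (fun k => ((X k (π i) : ℤ))) = (fun k => ((X0 k (π i) : ℤ))) :=
        funext fun k => by rw [hXag k]
      have e2 : (fun j => ((Y j i : ℤ))) = (fun j => ((Y0 j i : ℤ))) :=
        funext fun j => by rw [hYag j]
      have heq : extPred P (Fin.append (fun k => ((X k (π i) : ℤ))) (fun j => ((Y j i : ℤ))))
          = h0 := by
        rw [hh0def, e1, e2]
      rw [← heq]
      have pX : (∏ k, ∏ l, nKer γ (π i) X0 k l (X k l))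
          ≤ ∏ k, ∏ l, unifNoise γ (X0 k l) (X k l) :=
        Finset.prod_le_prod (fun k _ => Finset.prod_nonneg fun l _ =>
            nKer_nonneg hγ0 hγ1 _ _ _ _ _)
          (fun k _ => Finset.prod_le_prod (fun l _ => nKer_nonneg hγ0 hγ1 _ _ _ _ _)
            (fun l _ => nKer_le hγ0 _ _ _ _ _))
      have pY : (∏ j, ∏ r, nKer γ i Y0 j r (Y j r))
          ≤ ∏ j, ∏ r, unifNoise γ (Y0 j r) (Y j r) :=
        Finset.prod_le_prod (fun j _ => Finset.prod_nonneg fun r _ =>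
            nKer_nonneg hγ0 hγ1 _ _ _ _ _)
          (fun j _ => Finset.prod_le_prod (fun r _ => nKer_nonneg hγ0 hγ1 _ _ _ _ _)
            (fun r _ => nKer_le hγ0 _ _ _ _ _))
      have huXnn : (0:ℝ) ≤ ∏ k, ∏ l, unifNoise γ (X0 k l) (X k l) :=
        Finset.prod_nonneg fun k _ => Finset.prod_nonneg fun l _ => unifNoise_nonneg hγ0 hγ1 _ _
      exact mul_le_mul_of_nonneg_right (mul_le_mul pX pY hYnn huXnn) (extPred_nonneg _ _)
  calc (1 - γ) ^ (t + s) * h0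
      = ((∑ X : Fin t → L0 → ↥Q1, ∏ k, ∏ l, nKer γ (π i) X0 k l (X k l)) *
          (∑ Y : Fin s → R0 → ↥Q2, ∏ j, ∏ r, nKer γ i Y0 j r (Y j r))) * h0 := by
        rw [nKer_total hc1, nKer_total hc2, Fintype.card_fin, Fintype.card_fin, ← pow_add]
    _ = ∑ X : Fin t → L0 → ↥Q1, ∑ Y : Fin s → R0 → ↥Q2,
          ((∏ k, ∏ l, nKer γ (π i) X0 k l (X k l)) *
            ∏ j, ∏ r, nKer γ i Y0 j r (Y j r)) * h0 := by
        rw [Finset.sum_mul_sum]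
        simp only [Finset.sum_mul]
    _ ≤ _ := Finset.sum_le_sum fun X _ => Finset.sum_le_sum fun Y _ => hlow X Y

lemma sum4_comm {α β γ' δ : Type*} [Fintype α] [Fintype β] [Fintype γ'] [Fintype δ]
    (f : α → β → γ' → δ → ℝ) :
    ∑ a, ∑ b, ∑ c, ∑ d, f a b c d = ∑ c, ∑ d, ∑ a, ∑ b, f a b c d := by
  have h1 : ∑ a, ∑ b, ∑ c, ∑ d, f a b c d = ∑ a, ∑ c, ∑ b, ∑ d, f a b c d :=
    Finset.sum_congr rfl fun a _ => Finset.sum_comm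
  have h2 : ∑ a, ∑ c, ∑ b, ∑ d, f a b c d = ∑ c, ∑ a, ∑ b, ∑ d, f a b c d :=
    Finset.sum_comm
  have h3 : ∑ c, ∑ a, ∑ b, ∑ d, f a b c d = ∑ c, ∑ a, ∑ d, ∑ b, f a b c d :=
    Finset.sum_congr rfl fun c _ => Finset.sum_congr rfl fun a _ => Finset.sum_comm
  have h4 : ∑ c, ∑ a, ∑ d, ∑ b, f a b c d = ∑ c, ∑ d, ∑ a, ∑ b, f a b c d :=
    Finset.sum_congr rfl fun c _ => Finset.sum_comm
  rw [h1, h2, h3, h4]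

lemma accProb_swap {t s : ℕ} {Q1 Q2 : Finset ℤ}
    {L0 R0 : Type} [Fintype L0] [Fintype R0] [DecidableEq L0] [DecidableEq R0]
    (P : Finset (Equiv.Perm (Fin (t + s))))
    (D : (Fin t → ↥Q1) × (Fin s → ↥Q2) → ℝ) (γ : ℝ) (π : R0 → L0)
    (f : (L0 → ↥Q1) → ℤ) (g : (R0 → ↥Q2) → ℤ) :
    accProb P D γ π f g
      = ∑ X0 : Fin t → L0 → ↥Q1, ∑ Y0 : Fin s → R0 → ↥Q2,
          ((∏ l : L0, margFst D (fun k => X0 k l)) *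
            ∏ r : R0, D (fun k => X0 k (π r), fun j => Y0 j r) /
              margFst D (fun k => X0 k (π r))) *
          ∑ X : Fin t → L0 → ↥Q1, ∑ Y : Fin s → R0 → ↥Q2,
            ((∏ k, ∏ l, unifNoise γ (X0 k l) (X k l)) *
              ∏ j, ∏ r, unifNoise γ (Y0 j r) (Y j r)) *
              extPred P (Fin.append (fun k => f (X k)) (fun j => g (Y j))) := by
  unfold accProb testDensity
  simp only [Finset.sum_mul]
  rw [sum4_comm]
  refine Finset.sum_congr rfl fun X0 _ => Finset.sum_congr rfl fun Y0 _ => ?_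
  simp only [Finset.mul_sum, mul_assoc]

lemma baseVal_eq {t s : ℕ} {Q1 Q2 : Finset ℤ}
    (P : Finset (Equiv.Perm (Fin (t + s))))
    (D : (Fin t → ↥Q1) × (Fin s → ↥Q2) → ℝ) :
    baseVal P D = ∑ x : Fin t → ↥Q1, ∑ y : Fin s → ↥Q2,
      D (x, y) * extPred P (Fin.append (fun k => ((x k : ℤ))) (fun j => ((y j : ℤ)))) :=
  Fintype.sum_prod_type _

/-- Lemma: completeness of the dictatorship test.
If `g(y) = y_i` and `f(x) = x_{π(i)}` are dictators matched by the projection `π`, then the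
acceptance probability of the test is at least `E_{a∼D}[P(a)] − γ·m` (here `m = t + s`). -/
theorem dictator_acceptance {t s : ℕ} (ht : 1 ≤ t) (hs : 1 ≤ s)
    (Q1 Q2 : Finset ℤ) (hQ1 : Q1.Nonempty) (hQ2 : Q2.Nonempty)
    (P : Finset (Equiv.Perm (Fin (t + s))))
    (D : (Fin t → ↥Q1) × (Fin s → ↥Q2) → ℝ)
    (hDnn : ∀ p, 0 ≤ D p) (hDsum : ∑ p, D p = 1)
    (L0 R0 : Type) [Fintype L0] [Fintype R0] [DecidableEq L0] [DecidableEq R0]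
    (π : R0 → L0) (γ : ℝ) (hγ0 : 0 < γ) (hγ1 : γ < 1) (i : R0) :
    accProb P D γ π (fun x => ((x (π i) : ℤ))) (fun y => ((y i : ℤ)))
      ≥ baseVal P D - γ * (t + s : ℝ) := by
  classical
  have hc1 : (Fintype.card ↥Q1 : ℝ) ≠ 0 := by
    rw [Fintype.card_coe]
    exact_mod_cast (Finset.card_pos.mpr hQ1).ne'
  have hc2 : (Fintype.card ↥Q2 : ℝ) ≠ 0 := by
    rw [Fintype.card_coe]
    exact_mod_cast (Finset.card_pos.mpr hQ2).ne'
  have hγ0' : (0:ℝ) ≤ γ := le_of_lt hγ0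
  have hγ1' : γ ≤ 1 := le_of_lt hγ1
  have hwnn : ∀ (X0 : Fin t → L0 → ↥Q1) (Y0 : Fin s → R0 → ↥Q2),
      (0:ℝ) ≤ (∏ l : L0, margFst D (fun k => X0 k l)) *
        ∏ r : R0, D (fun k => X0 k (π r), fun j => Y0 j r) /
          margFst D (fun k => X0 k (π r)) := by
    intro X0 Y0
    apply mul_nonneg
    · exact Finset.prod_nonneg fun l _ => Finset.sum_nonneg fun y _ => hDnn _
    · exact Finset.prod_nonneg fun r _ => div_nonneg (hDnn _)
        (Finset.sum_nonneg fun y _ => hDnn _)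
  rw [ge_iff_le, accProb_swap]
  have step1 : ∑ X0 : Fin t → L0 → ↥Q1, ∑ Y0 : Fin s → R0 → ↥Q2,
      ((∏ l : L0, margFst D (fun k => X0 k l)) *
        ∏ r : R0, D (fun k => X0 k (π r), fun j => Y0 j r) /
          margFst D (fun k => X0 k (π r))) *
      ((1 - γ) ^ (t + s) *
        extPred P (Fin.append (fun k => ((X0 k (π i) : ℤ))) (fun j => ((Y0 j i : ℤ)))))
      ≤ ∑ X0 : Fin t → L0 → ↥Q1, ∑ Y0 : Fin s → R0 → ↥Q2,
        ((∏ l : L0, margFst D (fun k => X0 k l)) *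
          ∏ r : R0, D (fun k => X0 k (π r), fun j => Y0 j r) /
            margFst D (fun k => X0 k (π r))) *
        ∑ X : Fin t → L0 → ↥Q1, ∑ Y : Fin s → R0 → ↥Q2,
          ((∏ k, ∏ l, unifNoise γ (X0 k l) (X k l)) *
            ∏ j, ∏ r, unifNoise γ (Y0 j r) (Y j r)) *
            extPred P (Fin.append (fun k => (((X k) (π i) : ℤ))) (fun j => (((Y j) i : ℤ)))) :=
    Finset.sum_le_sum fun X0 _ => Finset.sum_le_sum fun Y0 _ =>
      mul_le_mul_of_nonneg_left (noise_bound P π i hγ0' hγ1' hc1 hc2 X0 Y0) (hwnn X0 Y0)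
  have step2 : ∑ X0 : Fin t → L0 → ↥Q1, ∑ Y0 : Fin s → R0 → ↥Q2,
      ((∏ l : L0, margFst D (fun k => X0 k l)) *
        ∏ r : R0, D (fun k => X0 k (π r), fun j => Y0 j r) /
          margFst D (fun k => X0 k (π r))) *
      ((1 - γ) ^ (t + s) *
        extPred P (Fin.append (fun k => ((X0 k (π i) : ℤ))) (fun j => ((Y0 j i : ℤ)))))
      = (1 - γ) ^ (t + s) * baseVal P D := by
    have e0 : ∀ (X0 : Fin t → L0 → ↥Q1) (Y0 : Fin s → R0 → ↥Q2),
        ((∏ l : L0, margFst D (fun k => X0 k l)) *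
          ∏ r : R0, D (fun k => X0 k (π r), fun j => Y0 j r) /
            margFst D (fun k => X0 k (π r))) *
        ((1 - γ) ^ (t + s) *
          extPred P (Fin.append (fun k => ((X0 k (π i) : ℤ))) (fun j => ((Y0 j i : ℤ)))))
        = (1 - γ) ^ (t + s) *
          (((∏ l : L0, margFst D (fun k => X0 k l)) *
            ∏ r : R0, D (fun k => X0 k (π r), fun j => Y0 j r) /
              margFst D (fun k => X0 k (π r))) *
          extPred P (Fin.append (fun k => ((X0 k (π i) : ℤ))) (fun j => ((Y0 j i : ℤ))))) :=
      fun X0 Y0 => mul_left_comm _ _ _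
    refine Eq.trans (Finset.sum_congr rfl fun X0 _ => Finset.sum_congr rfl fun Y0 _ => e0 X0 Y0) ?_
    refine Eq.trans (Finset.sum_congr rfl fun X0 _ => (Finset.mul_sum _ _ _).symm) ?_
    refine Eq.trans (Finset.mul_sum _ _ _).symm ?_
    refine congrArg (fun z => (1 - γ) ^ (t + s) * z) ?_
    refine Eq.trans (marg_id D hDnn hDsum π i
      (fun x y => extPred P (Fin.append (fun k => ((x k : ℤ))) (fun j => ((y j : ℤ)))))) ?_
    exact (baseVal_eq P D).symm
  have hb0 : 0 ≤ baseVal P D :=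
    Finset.sum_nonneg fun p _ => mul_nonneg (hDnn p) (extPred_nonneg _ _)
  have hb1 : baseVal P D ≤ 1 := by
    have : baseVal P D ≤ ∑ p : (Fin t → ↥Q1) × (Fin s → ↥Q2), D p * 1 :=
      Finset.sum_le_sum fun p _ => mul_le_mul_of_nonneg_left (extPred_le_one _ _) (hDnn p)
    simpa [hDsum] using this
  have bern : 1 - γ * ((t:ℝ) + s) ≤ (1 - γ) ^ (t + s) := by
    have h2 := one_add_mul_le_pow (a := -γ) (by linarith) (t + s)
    have h3 : (1:ℝ) + (((t + s : ℕ)):ℝ) * (-γ) = 1 - γ * ((t:ℝ) + s) := by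
      push_cast
      ring
    have h4 : ((1:ℝ) + -γ) = 1 - γ := by ring
    rw [h3, h4] at h2
    exact h2
  have hγm : (0:ℝ) ≤ γ * ((t:ℝ) + s) := by positivity
  have e1 : (1 - γ * ((t:ℝ) + s)) * baseVal P D ≤ (1 - γ) ^ (t + s) * baseVal P D :=
    mul_le_mul_of_nonneg_right bern hb0
  calc baseVal P D - γ * ((t:ℝ) + s) ≤ (1 - γ) ^ (t + s) * baseVal P D := by nlinarith
    _ = _ := step2.symm
    _ ≤ _ := step1

end OCSPPaper
end
end

section
/- Fix an integer q ≥ 2 and let (x_1, y_2, y_3) ∼ D_BTW. Then: (1) x_1 is uniform on {−1, q}, and y_2 and y_3 are each uniform on [q]; (2) y_2 and y_3 are each independent of x_1; (3) the pair (y_2, y_3) has the same joint distribution as (y_3, y_2); (4) E[BTW(x_1, y_2, y_3)] ≥ 1 − 1/q, where BTW is evaluated via its extension to ℤ^3. -/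
open Classical Finset

noncomputable section
namespace OCSPPaper

/-- The betweenness predicate `BTW ⊆ S_3`: the third element lies strictly between the first
two, i.e. its rank is the middle one. -/
def btwPerm3 : Finset (Equiv.Perm (Fin 3)) :=
  Finset.univ.filter fun σ => σ 2 = 1

/-- Density of the distribution `D_BTW` on `ℤ³`: `x₁` is uniform on `{-1, q}`, `y₂` is
uniform on `[q]`, and `y₃ = y₂ + 1 mod q` if `x₁ = q`, else `y₃ = y₂ - 1 mod q`. -/
noncomputable def dBTW (q : ℕ) : ℤ × ℤ × ℤ → ℝ := fun p =>
  if (p.1 = (q : ℤ) ∨ p.1 = -1) ∧ 0 ≤ p.2.1 ∧ p.2.1 < (q : ℤ) ∧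
      p.2.2 = (p.2.1 + if p.1 = (q : ℤ) then 1 else -1) % (q : ℤ)
  then 1 / (2 * (q : ℝ)) else 0

def cA : Equiv.Perm (Fin 3) := ⟨![2,0,1], ![1,2,0], by decide, by decide⟩
def cB : Equiv.Perm (Fin 3) := ⟨![0,2,1], ![0,2,1], by decide, by decide⟩

lemma compat_iff_A (a : Fin 3 → ℤ) (h1 : a 1 < a 2) (h2 : a 2 < a 0) (σ : Equiv.Perm (Fin 3)) :
    compatiblePerm a σ ↔ σ = cA := by
  constructor
  · intro h
    have e1 := h 1 2 h1
    have e2 := h 2 0 h2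
    have l1 : (σ 1 : ℕ) < σ 2 := e1
    have l2 : (σ 2 : ℕ) < σ 0 := e2
    have b0 : (σ 0 : ℕ) < 3 := (σ 0).is_lt
    ext i
    fin_cases i
    · show ((σ 0 : Fin 3) : ℕ) = 2; omega
    · show ((σ 1 : Fin 3) : ℕ) = 0; omega
    · show ((σ 2 : Fin 3) : ℕ) = 1; omega
  · rintro rfl
    intro i j hij
    fin_cases i <;> fin_cases j <;> simp only [Fin.mk_zero, Fin.mk_one, Fin.reduceFinMk] at hij ⊢ <;> first | omega | decide

lemma compat_iff_B (a : Fin 3 → ℤ) (h1 : a 0 < a 2) (h2 : a 2 < a 1) (σ : Equiv.Perm (Fin 3)) :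
    compatiblePerm a σ ↔ σ = cB := by
  constructor
  · intro h
    have l1 : (σ 0 : ℕ) < σ 2 := h 0 2 h1
    have l2 : (σ 2 : ℕ) < σ 1 := h 2 1 h2
    have b1 : (σ 1 : ℕ) < 3 := (σ 1).is_lt
    ext i
    fin_cases i
    · show ((σ 0 : Fin 3) : ℕ) = 0; omega
    · show ((σ 1 : Fin 3) : ℕ) = 2; omega
    · show ((σ 2 : Fin 3) : ℕ) = 1; omega
  · rintro rfl
    intro i j hij
    fin_cases i <;> fin_cases j <;> simp only [Fin.mk_zero, Fin.mk_one, Fin.reduceFinMk] at hij ⊢ <;> first | omega | decide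

lemma extPred_one_of_iff (a : Fin 3 → ℤ) (c : Equiv.Perm (Fin 3)) (hc : c ∈ btwPerm3)
    (hiff : ∀ σ, compatiblePerm a σ ↔ σ = c) : extPred btwPerm3 a = 1 := by
  have e1 : (Finset.univ.filter fun σ => compatiblePerm a σ ∧ σ ∈ btwPerm3) = {c} := by
    ext σ; simp [hiff, Finset.mem_filter]
    rintro rfl; exact hc
  have e2 : (Finset.univ.filter fun σ => compatiblePerm a σ) = {c} := by
    ext σ; simp [hiff, Finset.mem_filter]
  rw [extPred, e1, e2]; norm_num

lemma extPred_A (a : Fin 3 → ℤ) (h1 : a 1 < a 2) (h2 : a 2 < a 0) : extPred btwPerm3 a = 1 :=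
  extPred_one_of_iff a cA (by decide) (compat_iff_A a h1 h2)

lemma extPred_B (a : Fin 3 → ℤ) (h1 : a 0 < a 2) (h2 : a 2 < a 1) : extPred btwPerm3 a = 1 :=
  extPred_one_of_iff a cB (by decide) (compat_iff_B a h1 h2)

lemma inv_shift (q u v : ℤ) (hq : 2 ≤ q) :
    (0 ≤ u ∧ u < q ∧ v = (u + 1) % q) ↔ (0 ≤ v ∧ v < q ∧ u = (v + -1) % q) := by
  have hq0 : 0 < q := by omega
  constructor
  · rintro ⟨h0, h1, rfl⟩
    refine ⟨Int.emod_nonneg _ (by omega), Int.emod_lt_of_pos _ hq0, ?_⟩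
    rw [Int.emod_add_emod]
    simpa using (Int.emod_eq_of_lt h0 h1).symm
  · rintro ⟨h0, h1, rfl⟩
    refine ⟨Int.emod_nonneg _ (by omega), Int.emod_lt_of_pos _ hq0, ?_⟩
    rw [Int.emod_add_emod]
    simpa using (Int.emod_eq_of_lt h0 h1).symm

def Sfin (q : ℕ) : Finset (ℤ × ℤ × ℤ) :=
  ({-1, (q : ℤ)} : Finset ℤ) ×ˢ (Finset.Ico 0 (q : ℤ) ×ˢ Finset.Ico 0 (q : ℤ))

lemma dBTW_nonneg (q : ℕ) (p : ℤ × ℤ × ℤ) : 0 ≤ dBTW q p := by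
  unfold dBTW; split <;> positivity

lemma support_dBTW (q : ℕ) (hq : 2 ≤ q) {p : ℤ × ℤ × ℤ} (h : dBTW q p ≠ 0) : p ∈ Sfin q := by
  have hq2 : (2:ℤ) ≤ (q:ℤ) := by exact_mod_cast hq
  have hq0 : (0:ℤ) < q := by omega
  by_cases hc : (p.1 = (q : ℤ) ∨ p.1 = -1) ∧ 0 ≤ p.2.1 ∧ p.2.1 < (q : ℤ) ∧
      p.2.2 = (p.2.1 + if p.1 = (q : ℤ) then 1 else -1) % (q : ℤ)
  · obtain ⟨hx, hy0, hy1, hv⟩ := hc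
    simp only [Sfin, Finset.mem_product, Finset.mem_insert, Finset.mem_singleton, Finset.mem_Ico]
    refine ⟨by tauto, ⟨hy0, hy1⟩, ?_, ?_⟩
    · rw [hv]; exact Int.emod_nonneg _ (by omega)
    · rw [hv]; exact Int.emod_lt_of_pos _ hq0
  · exact absurd (by unfold dBTW; rw [if_neg hc]) h

lemma sum_v (q : ℕ) (hq : 2 ≤ q) (x y : ℤ) (hx : x = (q:ℤ) ∨ x = -1)
    (hy0 : 0 ≤ y) (hy1 : y < (q:ℤ)) :
    ∑ v ∈ Finset.Ico 0 (q:ℤ), dBTW q (x, y, v) = 1 / (2 * (q:ℝ)) := by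
  have hq2 : (2:ℤ) ≤ (q:ℤ) := by exact_mod_cast hq
  have hq0 : (0:ℤ) < q := by omega
  rw [Finset.sum_eq_single ((y + if x = (q:ℤ) then 1 else -1) % (q:ℤ))]
  · unfold dBTW
    exact if_pos ⟨hx, hy0, hy1, rfl⟩
  · intro v _ hv
    unfold dBTW
    rw [if_neg]; rintro ⟨-, -, -, h⟩; exact hv h
  · intro hmem
    exact absurd (Finset.mem_Ico.2 ⟨Int.emod_nonneg _ (by omega), Int.emod_lt_of_pos _ hq0⟩) hmem

lemma sum_y (q : ℕ) (hq : 2 ≤ q) (x b : ℤ) (hx : x = (q:ℤ) ∨ x = -1)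
    (hb0 : 0 ≤ b) (hb1 : b < (q:ℤ)) :
    ∑ y ∈ Finset.Ico 0 (q:ℤ), dBTW q (x, y, b) = 1 / (2 * (q:ℝ)) := by
  have hq2 : (2:ℤ) ≤ (q:ℤ) := by exact_mod_cast hq
  have hq0 : (0:ℤ) < q := by omega
  have hne : (-1 : ℤ) ≠ (q:ℤ) := by omega
  rcases hx with rfl | rfl
  · rw [Finset.sum_eq_single ((b + -1) % (q:ℤ))]
    · unfold dBTW
      have h := (inv_shift (q:ℤ) ((b + -1) % (q:ℤ)) b hq2).2 ⟨hb0, hb1, rfl⟩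
      refine if_pos ⟨Or.inl rfl, h.1, h.2.1, ?_⟩
      rw [if_pos rfl]; exact h.2.2
    · intro y _ hne'
      unfold dBTW
      rw [if_neg]
      rintro ⟨-, h0, h1, hv⟩
      rw [if_pos rfl] at hv
      exact hne' ((inv_shift (q:ℤ) y b hq2).1 ⟨h0, h1, hv⟩).2.2
    · intro hmem
      exact absurd (Finset.mem_Ico.2 ⟨Int.emod_nonneg _ (by omega), Int.emod_lt_of_pos _ hq0⟩) hmem
  · rw [Finset.sum_eq_single ((b + 1) % (q:ℤ))]
    · unfold dBTW
      have h := (inv_shift (q:ℤ) b ((b + 1) % (q:ℤ)) hq2).1 ⟨hb0, hb1, rfl⟩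
      refine if_pos ⟨Or.inr rfl, h.1, h.2.1, ?_⟩
      rw [if_neg hne]; exact h.2.2
    · intro y _ hne'
      unfold dBTW
      rw [if_neg]
      rintro ⟨-, h0, h1, hv⟩
      rw [if_neg hne] at hv
      exact hne' ((inv_shift (q:ℤ) b y hq2).2 ⟨h0, h1, hv⟩).2.2
    · intro hmem
      exact absurd (Finset.mem_Ico.2 ⟨Int.emod_nonneg _ (by omega), Int.emod_lt_of_pos _ hq0⟩) hmem

lemma finsum_eq_S (q : ℕ) (hq : 2 ≤ q) (f : ℤ × ℤ × ℤ → ℝ)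
    (hf : ∀ p, dBTW q p = 0 → f p = 0) :
    ∑ᶠ p : ℤ × ℤ × ℤ, f p = ∑ p ∈ Sfin q, f p :=
  finsum_eq_finset_sum_of_support_subset _ (fun p hp =>
    support_dBTW q hq (fun h => hp (hf p h)))

lemma card_Ico_real (q : ℕ) : (((Finset.Ico 0 (q:ℤ)).card : ℝ)) = (q : ℝ) := by
  rw [Int.card_Ico]; simp

lemma inner1 (q : ℕ) (hq : 2 ≤ q) (x : ℤ) (hx : x = (q:ℤ) ∨ x = -1) :
    ∑ r ∈ Finset.Ico 0 (q:ℤ) ×ˢ Finset.Ico 0 (q:ℤ), dBTW q (x, r) = 1 / 2 := by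
  have hqR : (0:ℝ) < (q:ℝ) := by exact_mod_cast Nat.lt_of_lt_of_le (by norm_num) hq
  rw [Finset.sum_product]
  have : ∀ y ∈ Finset.Ico 0 (q:ℤ), ∑ v ∈ Finset.Ico 0 (q:ℤ), dBTW q (x, y, v) = 1 / (2*(q:ℝ)) :=
    fun y hy => by
      obtain ⟨h0, h1⟩ := Finset.mem_Ico.1 hy
      exact sum_v q hq x y hx h0 h1
  rw [Finset.sum_congr rfl this, Finset.sum_const, nsmul_eq_mul]
  rw [show ((Finset.Ico 0 (q:ℤ)).card : ℝ) = (q:ℝ) from card_Ico_real q]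
  field_simp

lemma inner2 (q : ℕ) (hq : 2 ≤ q) (x b : ℤ) (hx : x = (q:ℤ) ∨ x = -1) :
    ∑ r ∈ Finset.Ico 0 (q:ℤ) ×ˢ Finset.Ico 0 (q:ℤ), (if r.1 = b then dBTW q (x, r) else 0)
      = if 0 ≤ b ∧ b < (q:ℤ) then 1 / (2*(q:ℝ)) else 0 := by
  rw [Finset.sum_product]
  have step : ∀ y ∈ Finset.Ico 0 (q:ℤ),
      ∑ v ∈ Finset.Ico 0 (q:ℤ), (if y = b then dBTW q (x, y, v) else 0)
      = if y = b then ∑ v ∈ Finset.Ico 0 (q:ℤ), dBTW q (x, y, v) else 0 := by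
    intro y _; split <;> simp
  rw [Finset.sum_congr rfl step, Finset.sum_ite_eq' (Finset.Ico 0 (q:ℤ)) b]
  by_cases hb : 0 ≤ b ∧ b < (q:ℤ)
  · rw [if_pos (Finset.mem_Ico.2 hb), if_pos hb, sum_v q hq x b hx hb.1 hb.2]
  · rw [if_neg (fun h => hb (Finset.mem_Ico.1 h)), if_neg hb]

lemma inner3 (q : ℕ) (hq : 2 ≤ q) (x b : ℤ) (hx : x = (q:ℤ) ∨ x = -1) :
    ∑ r ∈ Finset.Ico 0 (q:ℤ) ×ˢ Finset.Ico 0 (q:ℤ), (if r.2 = b then dBTW q (x, r) else 0)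
      = if 0 ≤ b ∧ b < (q:ℤ) then 1 / (2*(q:ℝ)) else 0 := by
  rw [Finset.sum_product]
  have step : ∀ y ∈ Finset.Ico 0 (q:ℤ),
      ∑ v ∈ Finset.Ico 0 (q:ℤ), (if v = b then dBTW q (x, y, v) else 0)
      = if 0 ≤ b ∧ b < (q:ℤ) then dBTW q (x, y, b) else 0 := by
    intro y _
    rw [Finset.sum_ite_eq' (Finset.Ico 0 (q:ℤ)) b (fun v => dBTW q (x, y, v))]
    congr 1
    simp [Finset.mem_Ico]
  rw [Finset.sum_congr rfl step]
  by_cases hb : 0 ≤ b ∧ b < (q:ℤ)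
  · simp only [if_pos hb]
    exact sum_y q hq x b hx hb.1 hb.2
  · simp [if_neg hb]

lemma neg_one_ne (q : ℕ) (hq : 2 ≤ q) : (-1 : ℤ) ≠ (q:ℤ) := by
  have : (2:ℤ) ≤ (q:ℤ) := by exact_mod_cast hq
  omega

lemma marg1 (q : ℕ) (hq : 2 ≤ q) (a : ℤ) :
    (∑ᶠ p : ℤ × ℤ × ℤ, if p.1 = a then dBTW q p else 0)
      = if a = -1 ∨ a = (q : ℤ) then 1 / 2 else 0 := by
  rw [finsum_eq_S q hq _ (fun p hp => by rw [hp, ite_self]),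
    Sfin, Finset.sum_product, Finset.sum_pair (neg_one_ne q hq)]
  have e : ∀ x : ℤ, x = (q:ℤ) ∨ x = -1 →
      ∑ r ∈ Finset.Ico 0 (q:ℤ) ×ˢ Finset.Ico 0 (q:ℤ),
        (if (x, r).1 = a then dBTW q (x, r) else 0) = if x = a then 1/2 else 0 := by
    intro x hx
    by_cases hxa : x = a
    · simp only [hxa, if_pos rfl]
      exact hxa ▸ inner1 q hq x hx
    · simp [hxa]
  rw [e _ (Or.inr rfl), e _ (Or.inl rfl)]
  have hq1 : ((q:ℤ)) ≠ -1 := fun h => neg_one_ne q hq h.symm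
  by_cases h1 : a = -1
  · subst h1; simp [hq1]
  · by_cases h2 : a = (q:ℤ)
    · subst h2; simp [hq1, Ne.symm hq1]
    · simp [h1, h2, show (-1:ℤ) ≠ a from fun h => h1 h.symm,
        show ((q:ℤ)) ≠ a from fun h => h2 h.symm]

lemma marg2 (q : ℕ) (hq : 2 ≤ q) (b : ℤ) :
    (∑ᶠ p : ℤ × ℤ × ℤ, if p.2.1 = b then dBTW q p else 0)
      = if 0 ≤ b ∧ b < (q : ℤ) then 1 / (q : ℝ) else 0 := by
  have hqR : (0:ℝ) < (q:ℝ) := by exact_mod_cast Nat.lt_of_lt_of_le (by norm_num) hq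
  rw [finsum_eq_S q hq _ (fun p hp => by rw [hp, ite_self]),
    Sfin, Finset.sum_product, Finset.sum_pair (neg_one_ne q hq),
    inner2 q hq (-1) b (Or.inr rfl), inner2 q hq (q:ℤ) b (Or.inl rfl)]
  have hqne : (q:ℝ) ≠ 0 := ne_of_gt hqR
  by_cases hb : 0 ≤ b ∧ b < (q:ℤ)
  · simp only [if_pos hb]
    rw [← add_div, div_eq_div_iff (by positivity) hqR.ne']
    ring
  · simp only [if_neg hb]; norm_num

lemma marg3 (q : ℕ) (hq : 2 ≤ q) (b : ℤ) :
    (∑ᶠ p : ℤ × ℤ × ℤ, if p.2.2 = b then dBTW q p else 0)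
      = if 0 ≤ b ∧ b < (q : ℤ) then 1 / (q : ℝ) else 0 := by
  have hqR : (0:ℝ) < (q:ℝ) := by exact_mod_cast Nat.lt_of_lt_of_le (by norm_num) hq
  rw [finsum_eq_S q hq _ (fun p hp => by rw [hp, ite_self]),
    Sfin, Finset.sum_product, Finset.sum_pair (neg_one_ne q hq),
    inner3 q hq (-1) b (Or.inr rfl), inner3 q hq (q:ℤ) b (Or.inl rfl)]
  have hqne : (q:ℝ) ≠ 0 := ne_of_gt hqR
  by_cases hb : 0 ≤ b ∧ b < (q:ℤ)
  · simp only [if_pos hb]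
    rw [← add_div, div_eq_div_iff (by positivity) hqR.ne']
    ring
  · simp only [if_neg hb]; norm_num

lemma joint1 (q : ℕ) (hq : 2 ≤ q) (a b : ℤ) :
    (∑ᶠ p : ℤ × ℤ × ℤ, if p.1 = a ∧ p.2.1 = b then dBTW q p else 0)
      = (if a = -1 ∨ a = (q : ℤ) then (1:ℝ) / 2 else 0) *
        (if 0 ≤ b ∧ b < (q : ℤ) then 1 / (q : ℝ) else 0) := by
  have hqR : (0:ℝ) < (q:ℝ) := by exact_mod_cast Nat.lt_of_lt_of_le (by norm_num) hq
  rw [finsum_eq_S q hq _ (fun p hp => by rw [hp, ite_self]),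
    Sfin, Finset.sum_product, Finset.sum_pair (neg_one_ne q hq)]
  have e : ∀ x : ℤ, x = (q:ℤ) ∨ x = -1 →
      ∑ r ∈ Finset.Ico 0 (q:ℤ) ×ˢ Finset.Ico 0 (q:ℤ),
        (if (x, r).1 = a ∧ (x, r).2.1 = b then dBTW q (x, r) else 0)
      = if x = a then (if 0 ≤ b ∧ b < (q:ℤ) then 1 / (2*(q:ℝ)) else 0) else 0 := by
    intro x hx
    by_cases hxa : x = a
    · simp only [hxa, if_pos rfl, true_and]
      exact hxa ▸ inner2 q hq x b hx
    · simp [hxa]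
  rw [e _ (Or.inr rfl), e _ (Or.inl rfl)]
  have hq1 : ((q:ℤ)) ≠ -1 := fun h => neg_one_ne q hq h.symm
  have hqne : (q:ℝ) ≠ 0 := ne_of_gt hqR
  by_cases h1 : a = -1
  · subst h1
    rw [if_pos rfl, if_neg hq1, add_zero, if_pos (Or.inl rfl)]
    by_cases hb : 0 ≤ b ∧ b < (q:ℤ)
    · simp only [if_pos hb]
      rw [div_mul_div_comm, one_mul]
    · simp only [if_neg hb]; rw [mul_zero]
  · by_cases h2 : a = (q:ℤ)
    · subst h2
      rw [if_neg (Ne.symm hq1), if_pos rfl, zero_add, if_pos (Or.inr rfl)]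
      by_cases hb : 0 ≤ b ∧ b < (q:ℤ)
      · simp only [if_pos hb]
        rw [div_mul_div_comm, one_mul]
      · simp only [if_neg hb]; rw [mul_zero]
    · rw [if_neg (fun h => h1 h.symm), if_neg (fun h => h2 h.symm),
        if_neg (by tauto), add_zero, zero_mul]

lemma joint2 (q : ℕ) (hq : 2 ≤ q) (a b : ℤ) :
    (∑ᶠ p : ℤ × ℤ × ℤ, if p.1 = a ∧ p.2.2 = b then dBTW q p else 0)
      = (if a = -1 ∨ a = (q : ℤ) then (1:ℝ) / 2 else 0) *
        (if 0 ≤ b ∧ b < (q : ℤ) then 1 / (q : ℝ) else 0) := by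
  have hqR : (0:ℝ) < (q:ℝ) := by exact_mod_cast Nat.lt_of_lt_of_le (by norm_num) hq
  rw [finsum_eq_S q hq _ (fun p hp => by rw [hp, ite_self]),
    Sfin, Finset.sum_product, Finset.sum_pair (neg_one_ne q hq)]
  have e : ∀ x : ℤ, x = (q:ℤ) ∨ x = -1 →
      ∑ r ∈ Finset.Ico 0 (q:ℤ) ×ˢ Finset.Ico 0 (q:ℤ),
        (if (x, r).1 = a ∧ (x, r).2.2 = b then dBTW q (x, r) else 0)
      = if x = a then (if 0 ≤ b ∧ b < (q:ℤ) then 1 / (2*(q:ℝ)) else 0) else 0 := by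
    intro x hx
    by_cases hxa : x = a
    · simp only [hxa, if_pos rfl, true_and]
      exact hxa ▸ inner3 q hq x b hx
    · simp [hxa]
  rw [e _ (Or.inr rfl), e _ (Or.inl rfl)]
  have hq1 : ((q:ℤ)) ≠ -1 := fun h => neg_one_ne q hq h.symm
  have hqne : (q:ℝ) ≠ 0 := ne_of_gt hqR
  by_cases h1 : a = -1
  · subst h1
    rw [if_pos rfl, if_neg hq1, add_zero, if_pos (Or.inl rfl)]
    by_cases hb : 0 ≤ b ∧ b < (q:ℤ)
    · simp only [if_pos hb]
      rw [div_mul_div_comm, one_mul]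
    · simp only [if_neg hb]; rw [mul_zero]
  · by_cases h2 : a = (q:ℤ)
    · subst h2
      rw [if_neg (Ne.symm hq1), if_pos rfl, zero_add, if_pos (Or.inr rfl)]
      by_cases hb : 0 ≤ b ∧ b < (q:ℤ)
      · simp only [if_pos hb]
        rw [div_mul_div_comm, one_mul]
      · simp only [if_neg hb]; rw [mul_zero]
    · rw [if_neg (fun h => h1 h.symm), if_neg (fun h => h2 h.symm),
        if_neg (by tauto), add_zero, zero_mul]

lemma supz (q : ℕ) (hq : 2 ≤ q) (u v : ℤ) :
    Function.support (fun z => dBTW q (z, u, v)) ⊆ ↑({-1, (q:ℤ)} : Finset ℤ) := by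
  intro z hz
  simp only [Finset.coe_insert, Finset.coe_singleton, Set.mem_insert_iff, Set.mem_singleton_iff]
  by_cases hc : (z = (q : ℤ) ∨ z = -1) ∧ 0 ≤ u ∧ u < (q : ℤ) ∧
      v = (u + if z = (q : ℤ) then 1 else -1) % (q : ℤ)
  · tauto
  · exact absurd (by unfold dBTW; exact if_neg hc) hz

lemma cross (q : ℕ) (hq : 2 ≤ q) (u v : ℤ) :
    dBTW q (-1, u, v) = dBTW q ((q:ℤ), v, u) := by
  have hq2 : (2:ℤ) ≤ (q:ℤ) := by exact_mod_cast hq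
  have hne : (-1 : ℤ) ≠ (q:ℤ) := by omega
  unfold dBTW
  refine if_congr ⟨?_, ?_⟩ rfl rfl
  · rintro ⟨-, h0, h1, hv⟩
    rw [if_neg hne] at hv
    have h := (inv_shift (q:ℤ) v u hq2).2 ⟨h0, h1, hv⟩
    exact ⟨Or.inl rfl, h.1, h.2.1, by rw [if_pos rfl]; exact h.2.2⟩
  · rintro ⟨-, h0, h1, hv⟩
    rw [if_pos rfl] at hv
    have h := (inv_shift (q:ℤ) v u hq2).1 ⟨h0, h1, hv⟩
    exact ⟨Or.inr rfl, h.1, h.2.1, by rw [if_neg hne]; exact h.2.2⟩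

lemma swap6 (q : ℕ) (hq : 2 ≤ q) (u v : ℤ) :
    (∑ᶠ z : ℤ, dBTW q (z, u, v)) = ∑ᶠ z : ℤ, dBTW q (z, v, u) := by
  have hne : (-1 : ℤ) ≠ (q:ℤ) := neg_one_ne q hq
  rw [finsum_eq_finset_sum_of_support_subset _ (supz q hq u v),
    finsum_eq_finset_sum_of_support_subset _ (supz q hq v u),
    Finset.sum_pair hne, Finset.sum_pair hne,
    cross q hq u v, show dBTW q ((q:ℤ), u, v) = dBTW q (-1, v, u) from (cross q hq v u).symm,
    add_comm]

lemma toNat_cast_real (q : ℕ) (hq : 2 ≤ q) : ((((q:ℤ) - 1).toNat : ℝ)) = (q:ℝ) - 1 := by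
  have hq2 : (2:ℤ) ≤ (q:ℤ) := by exact_mod_cast hq
  have h1 : ((((q:ℤ) - 1).toNat : ℤ)) = (q:ℤ) - 1 := Int.toNat_of_nonneg (by omega)
  exact_mod_cast congrArg (fun z : ℤ => (z : ℝ)) h1

lemma expect (q : ℕ) (hq : 2 ≤ q) :
    (∑ᶠ p : ℤ × ℤ × ℤ, dBTW q p * extPred btwPerm3 ![p.1, p.2.1, p.2.2])
      ≥ 1 - 1 / (q : ℝ) := by
  have hq2 : (2:ℤ) ≤ (q:ℤ) := by exact_mod_cast hq
  have hqR : (0:ℝ) < (q:ℝ) := by exact_mod_cast Nat.lt_of_lt_of_le (by norm_num) hq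
  have hne : (-1 : ℤ) ≠ (q:ℤ) := by omega
  rw [finsum_eq_S q hq _ (fun p hp => by rw [hp, zero_mul])]
  set F : ℤ × ℤ × ℤ → ℝ := fun p => dBTW q p * extPred btwPerm3 ![p.1, p.2.1, p.2.2] with hF
  set G1 : Finset (ℤ × ℤ × ℤ) := (Finset.Ico (1:ℤ) (q:ℤ)).image (fun y => ((-1:ℤ), y, y - 1))
    with hG1
  set G2 : Finset (ℤ × ℤ × ℤ) := (Finset.Ico (0:ℤ) ((q:ℤ) - 1)).image
    (fun y => ((q:ℤ), y, y + 1)) with hG2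
  have hdisj : Disjoint G1 G2 := by
    rw [Finset.disjoint_left]
    intro p hp1 hp2
    rw [hG1, Finset.mem_image] at hp1
    rw [hG2, Finset.mem_image] at hp2
    obtain ⟨y, -, rfl⟩ := hp1
    obtain ⟨z, -, hz⟩ := hp2
    exact hne (congrArg Prod.fst hz).symm
  have hsub : G1 ∪ G2 ⊆ Sfin q := by
    intro p hp
    rcases Finset.mem_union.1 hp with h | h
    · rw [hG1, Finset.mem_image] at h
      obtain ⟨y, hy, rfl⟩ := h
      rw [Finset.mem_Ico] at hy
      unfold Sfin
      refine Finset.mem_product.2 ⟨?_, Finset.mem_product.2 ⟨?_, ?_⟩⟩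
      · exact Finset.mem_insert_self _ _
      · show y ∈ Finset.Ico (0:ℤ) (q:ℤ); rw [Finset.mem_Ico]; omega
      · show y - 1 ∈ Finset.Ico (0:ℤ) (q:ℤ); rw [Finset.mem_Ico]; omega
    · rw [hG2, Finset.mem_image] at h
      obtain ⟨y, hy, rfl⟩ := h
      rw [Finset.mem_Ico] at hy
      unfold Sfin
      refine Finset.mem_product.2 ⟨?_, Finset.mem_product.2 ⟨?_, ?_⟩⟩
      · show (q:ℤ) ∈ ({-1, (q:ℤ)} : Finset ℤ); simp
      · show y ∈ Finset.Ico (0:ℤ) (q:ℤ); rw [Finset.mem_Ico]; omega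
      · show y + 1 ∈ Finset.Ico (0:ℤ) (q:ℤ); rw [Finset.mem_Ico]; omega
  have hS1 : ∑ p ∈ G1, F p = ((q:ℝ) - 1) * (1 / (2 * (q:ℝ))) := by
    rw [hG1, Finset.sum_image
      (fun x _ y _ h => congrArg (fun p : ℤ × ℤ × ℤ => p.2.1) h)]
    have t1 : ∀ y ∈ Finset.Ico (1:ℤ) (q:ℤ), F ((-1:ℤ), y, y - 1) = 1 / (2 * (q:ℝ)) := by
      intro y hy
      rw [Finset.mem_Ico] at hy
      have hmod : (y + -1) % (q:ℤ) = y - 1 := by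
        rw [show y + -1 = y - 1 from by ring]
        exact Int.emod_eq_of_lt (by omega) (by omega)
      have hd : dBTW q ((-1:ℤ), y, y - 1) = 1 / (2 * (q:ℝ)) := by
        unfold dBTW
        exact if_pos ⟨Or.inr rfl, show (0:ℤ) ≤ y by omega, show y < (q:ℤ) by omega,
          show y - 1 = (y + if (-1:ℤ) = (q:ℤ) then 1 else -1) % (q:ℤ) by
            rw [if_neg hne]; exact hmod.symm⟩
      have he : extPred btwPerm3 ![(-1:ℤ), y, y - 1] = 1 := by
        refine extPred_B _ ?_ ?_
        · show (-1:ℤ) < y - 1; omega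
        · show y - 1 < y; omega
      show dBTW q ((-1:ℤ), y, y - 1) * extPred btwPerm3 ![(-1:ℤ), y, y - 1] = 1 / (2 * (q:ℝ))
      rw [hd, he, mul_one]
    rw [Finset.sum_congr rfl t1, Finset.sum_const, Int.card_Ico, nsmul_eq_mul,
      toNat_cast_real q hq]
  have hS2 : ∑ p ∈ G2, F p = ((q:ℝ) - 1) * (1 / (2 * (q:ℝ))) := by
    rw [hG2, Finset.sum_image
      (fun x _ y _ h => congrArg (fun p : ℤ × ℤ × ℤ => p.2.1) h)]
    have t2 : ∀ y ∈ Finset.Ico (0:ℤ) ((q:ℤ) - 1), F ((q:ℤ), y, y + 1) = 1 / (2 * (q:ℝ)) := by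
      intro y hy
      rw [Finset.mem_Ico] at hy
      have hmod : (y + 1) % (q:ℤ) = y + 1 := Int.emod_eq_of_lt (by omega) (by omega)
      have hd : dBTW q ((q:ℤ), y, y + 1) = 1 / (2 * (q:ℝ)) := by
        unfold dBTW
        exact if_pos ⟨Or.inl rfl, show (0:ℤ) ≤ y by omega, show y < (q:ℤ) by omega,
          show y + 1 = (y + if (q:ℤ) = (q:ℤ) then 1 else -1) % (q:ℤ) by
            rw [if_pos rfl]; exact hmod.symm⟩
      have he : extPred btwPerm3 ![(q:ℤ), y, y + 1] = 1 := by
        refine extPred_A _ ?_ ?_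
        · show y < y + 1; omega
        · show y + 1 < (q:ℤ); omega
      show dBTW q ((q:ℤ), y, y + 1) * extPred btwPerm3 ![(q:ℤ), y, y + 1] = 1 / (2 * (q:ℝ))
      rw [hd, he, mul_one]
    rw [Finset.sum_congr rfl t2, Finset.sum_const, Int.card_Ico, nsmul_eq_mul, sub_zero,
      toNat_cast_real q hq]
  have hmain : ∑ p ∈ G1 ∪ G2, F p = 1 - 1 / (q:ℝ) := by
    rw [Finset.sum_union hdisj, hS1, hS2]
    field_simp
    ring
  rw [ge_iff_le, ← hmain]
  exact Finset.sum_le_sum_of_subset_of_nonneg hsub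
    (fun p _ _ => mul_nonneg (dBTW_nonneg q p) (extPred_nonneg _ _))


/-- properties of the base distribution `D_BTW`.
(1) the coordinate marginals are uniform on `{-1, q}`, `[q]`, `[q]` respectively;
(2) the second and third coordinates are each independent of the first;
(3) the pair `(y₂, y₃)` is exchangeable;
(4) `E[BTW(x₁, y₂, y₃)] ≥ 1 - 1/q`. -/
theorem dBTW_properties (q : ℕ) (hq : 2 ≤ q) :
    (∀ a : ℤ, (∑ᶠ p : ℤ × ℤ × ℤ, if p.1 = a then dBTW q p else 0)
        = if a = -1 ∨ a = (q : ℤ) then 1 / 2 else 0) ∧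
    (∀ b : ℤ, (∑ᶠ p : ℤ × ℤ × ℤ, if p.2.1 = b then dBTW q p else 0)
        = if 0 ≤ b ∧ b < (q : ℤ) then 1 / (q : ℝ) else 0) ∧
    (∀ b : ℤ, (∑ᶠ p : ℤ × ℤ × ℤ, if p.2.2 = b then dBTW q p else 0)
        = if 0 ≤ b ∧ b < (q : ℤ) then 1 / (q : ℝ) else 0) ∧
    (∀ a b : ℤ, (∑ᶠ p : ℤ × ℤ × ℤ, if p.1 = a ∧ p.2.1 = b then dBTW q p else 0)
        = (∑ᶠ p : ℤ × ℤ × ℤ, if p.1 = a then dBTW q p else 0) *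
          (∑ᶠ p : ℤ × ℤ × ℤ, if p.2.1 = b then dBTW q p else 0)) ∧
    (∀ a b : ℤ, (∑ᶠ p : ℤ × ℤ × ℤ, if p.1 = a ∧ p.2.2 = b then dBTW q p else 0)
        = (∑ᶠ p : ℤ × ℤ × ℤ, if p.1 = a then dBTW q p else 0) *
          (∑ᶠ p : ℤ × ℤ × ℤ, if p.2.2 = b then dBTW q p else 0)) ∧
    (∀ u v : ℤ, (∑ᶠ z : ℤ, dBTW q (z, u, v)) = ∑ᶠ z : ℤ, dBTW q (z, v, u)) ∧
    (∑ᶠ p : ℤ × ℤ × ℤ, dBTW q p * extPred btwPerm3 ![p.1, p.2.1, p.2.2])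
      ≥ 1 - 1 / (q : ℝ) := by
  refine ⟨marg1 q hq, marg2 q hq, marg3 q hq, ?_, ?_, swap6 q hq, expect q hq⟩
  · intro a b
    rw [joint1 q hq a b, marg1 q hq a, marg2 q hq b]
  · intro a b
    rw [joint2 q hq a b, marg1 q hq a, marg3 q hq b]


end OCSPPaper
end
end

section
/- Let μ be a finitely supported probability distribution on ℤ^3 that is symmetric under swapping the last two coordinates, i.e., μ(z,u,v) = μ(z,v,u) for all (z,u,v) ∈ ℤ^3. Then E_{(z,u,v)∼μ}[BTW(z,u,v)] ≤ 1/2, where BTW is evaluated via its extension to ℤ^3. -/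
open Classical Finset

noncomputable section
namespace OCSPPaper

lemma compatiblePerm_comp {m : ℕ} (a : Fin m → ℤ) (τ σ : Equiv.Perm (Fin m)) :
    compatiblePerm (a ∘ τ) σ ↔ compatiblePerm a (σ * τ⁻¹) := by
  constructor
  · intro h i j hij
    simpa using h (τ⁻¹ i) (τ⁻¹ j) (by simpa using hij)
  · intro h i j hij
    simpa using h (τ i) (τ j) (by simpa using hij)

lemma compat_nonempty {m : ℕ} (a : Fin m → ℤ) :
    ∃ σ : Equiv.Perm (Fin m), compatiblePerm a σ := by
  refine ⟨(Tuple.sort a)⁻¹, fun i j hij => ?_⟩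
  by_contra h
  push_neg at h
  have := Tuple.monotone_sort a h
  simp [Function.comp] at this
  omega

lemma key (z u v : ℤ) :
    extPred btwPerm3 ![z, u, v] + extPred btwPerm3 ![z, v, u] ≤ 1 := by
  set a : Fin 3 → ℤ := ![z, u, v] with ha
  set τ : Equiv.Perm (Fin 3) := Equiv.swap 1 2 with hτ
  have hb : ![z, v, u] = a ∘ τ := by
    ext i
    fin_cases i <;> simp [ha, hτ, Equiv.swap_apply_def]
  have hτinv : τ⁻¹ = τ := by rw [hτ, Equiv.swap_inv]
  -- denominator equality
  have hD : (Finset.univ.filter fun σ => compatiblePerm (a ∘ τ) σ).card =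
      (Finset.univ.filter fun σ => compatiblePerm a σ).card := by
    apply Finset.card_bij' (fun σ _ => σ * τ) (fun σ _ => σ * τ)
    · intro σ hσ
      simp only [Finset.mem_filter, Finset.mem_univ, true_and] at hσ ⊢
      rw [compatiblePerm_comp, hτinv] at hσ
      exact hσ
    · intro σ hσ
      simp only [Finset.mem_filter, Finset.mem_univ, true_and] at hσ ⊢
      rw [compatiblePerm_comp, hτinv]
      simpa [mul_assoc, hτ] using hσ
    · intro σ _; simp [mul_assoc, hτ]
    · intro σ _; simp [mul_assoc, hτ]
  -- numerator of second term
  have hN : (Finset.univ.filter fun σ => compatiblePerm (a ∘ τ) σ ∧ σ ∈ btwPerm3).card =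
      (Finset.univ.filter fun σ => compatiblePerm a σ ∧ σ 1 = 1).card := by
    apply Finset.card_bij' (fun σ _ => σ * τ) (fun σ _ => σ * τ)
    · intro σ hσ
      simp only [Finset.mem_filter, Finset.mem_univ, true_and, btwPerm3] at hσ ⊢
      rw [compatiblePerm_comp, hτinv] at hσ
      refine ⟨hσ.1, ?_⟩
      have : (σ * τ) 1 = σ 2 := by simp [hτ, Equiv.Perm.mul_apply]
      rw [this]; exact hσ.2
    · intro σ hσ
      simp only [Finset.mem_filter, Finset.mem_univ, true_and, btwPerm3] at hσ ⊢
      constructor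
      · rw [compatiblePerm_comp, hτinv]
        simpa [mul_assoc, hτ] using hσ.1
      · have : (σ * τ) 2 = σ 1 := by simp [hτ, Equiv.Perm.mul_apply]
        rw [this]; exact hσ.2
    · intro σ _; simp [mul_assoc, hτ]
    · intro σ _; simp [mul_assoc, hτ]
  -- the two numerator sets over `a` are disjoint subsets of the compat set
  set D := (Finset.univ.filter fun σ => compatiblePerm a σ) with hDset
  set A := (Finset.univ.filter fun σ => compatiblePerm a σ ∧ σ ∈ btwPerm3) with hA
  set B := (Finset.univ.filter fun σ => compatiblePerm a σ ∧ σ 1 = 1) with hB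
  have hDpos : 0 < D.card := by
    obtain ⟨σ, hσ⟩ := compat_nonempty a
    exact Finset.card_pos.2 ⟨σ, by simp [hDset, hσ]⟩
  have hdisj : Disjoint A B := by
    rw [Finset.disjoint_left]
    intro σ hσA hσB
    simp only [hA, hB, btwPerm3, Finset.mem_filter, Finset.mem_univ, true_and] at hσA hσB
    have h12 : σ 2 = σ 1 := by rw [hσA.2, hσB.2]
    exact absurd (σ.injective h12) (by decide)
  have hsub : A ∪ B ⊆ D := by
    intro σ hσ
    rcases Finset.mem_union.1 hσ with h | h <;>
      simp only [hA, hB, hDset, Finset.mem_filter, Finset.mem_univ, true_and] at h ⊢ <;>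
      exact h.1
  have hcard : A.card + B.card ≤ D.card := by
    rw [← Finset.card_union_of_disjoint hdisj]
    exact Finset.card_le_card hsub
  rw [hb]
  show extPred btwPerm3 a + extPred btwPerm3 (a ∘ τ) ≤ 1
  unfold extPred
  rw [hD, hN]
  rw [← add_div, div_le_one (by exact_mod_cast hDpos)]
  exact_mod_cast hcard

/-- swap-symmetric distributions fool betweenness.
If a finitely supported distribution `μ` on `ℤ³` is symmetric under swapping the last two
coordinates, then `E_{(z,u,v)∼μ}[BTW(z,u,v)] ≤ 1/2`. -/
theorem symmetric_btw_le_half (μ : ℤ × ℤ × ℤ → ℝ)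
    (hnn : ∀ p, 0 ≤ μ p)
    (hfin : (Function.support μ).Finite)
    (hsum : ∑ᶠ p : ℤ × ℤ × ℤ, μ p = 1)
    (hsymm : ∀ z u v : ℤ, μ (z, u, v) = μ (z, v, u)) :
    (∑ᶠ p : ℤ × ℤ × ℤ, μ p * extPred btwPerm3 ![p.1, p.2.1, p.2.2]) ≤ 1 / 2 := by
  set f : ℤ × ℤ × ℤ → ℝ := fun p => extPred btwPerm3 ![p.1, p.2.1, p.2.2] with hf
  set s := hfin.toFinset with hs
  have hsub : (Function.support fun p => μ p * f p) ⊆ ↑s := by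
    intro p hp
    simp only [Function.mem_support] at hp
    have : μ p ≠ 0 := fun h => hp (by simp [h])
    simpa [hs] using this
  have hS : (∑ᶠ p : ℤ × ℤ × ℤ, μ p * f p) = ∑ p ∈ s, μ p * f p :=
    finsum_eq_sum_of_support_subset _ hsub
  have hsum' : ∑ p ∈ s, μ p = 1 := by
    rw [← hsum]
    exact (finsum_eq_sum_of_support_subset _ (by simp [hs])).symm
  set e : ℤ × ℤ × ℤ → ℤ × ℤ × ℤ := fun p => (p.1, p.2.2, p.2.1) with he
  have hμe : ∀ p, μ (e p) = μ p := fun ⟨z, u, v⟩ => (hsymm z u v).symm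
  have hmem : ∀ p, e p ∈ s ↔ p ∈ s := by
    intro p
    simp only [hs, Set.Finite.mem_toFinset, Function.mem_support, hμe]
  have hre : ∑ p ∈ s, μ p * f p = ∑ p ∈ s, μ p * f (e p) := by
    apply Finset.sum_nbij' e e
    · intro p hp; exact (hmem p).2 hp
    · intro p hp; exact (hmem p).2 hp
    · intro p _; rfl
    · intro p _; rfl
    · intro p hp; rw [hμe]
  have hkey : ∀ p : ℤ × ℤ × ℤ, f p + f (e p) ≤ 1 := by
    rintro ⟨z, u, v⟩
    exact key z u v
  have h2 : (∑ p ∈ s, μ p * f p) + (∑ p ∈ s, μ p * f p) ≤ 1 := by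
    nth_rewrite 2 [hre]
    rw [← Finset.sum_add_distrib, ← hsum']
    apply Finset.sum_le_sum
    intro p _
    rw [← mul_add]
    calc μ p * (f p + f (e p)) ≤ μ p * 1 := by
          apply mul_le_mul_of_nonneg_left (hkey p) (hnn p)
      _ = μ p := mul_one _
  rw [hS]
  linarith

end OCSPPaper
end
end
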